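/- arXiv:2406.11010 — 2 statements merged into one kernel-verified Lean document; each statement's English description precedes it below -/
import Mathlib

section
/- Fix a class y ∈ Y and a nonempty set N of training points with |N| = K, and define the single-instance proxy game on the m labeling functions by the utility v(S) = (1/K) Σ_{i ∈ N} Θ_S^y(i) − 1/C for every coalition S ⊆ {1, …, m} (so v(∅) = 0). Then the Shapley value of labeling function j in this game equals (1/K) Σ_{i ∈ N} φ_{ij}^y. -/
open Finset

/-- Shapley value of player `j` in the cooperative game `v` on the finite player set `I`. -/
noncomputable def shapley {α : Type*} [DecidableEq α] (I : Finset α) (v : Finset α → ℝ)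
    (j : α) : ℝ :=
  (1 / (I.card : ℝ)) * ∑ S ∈ (I.erase j).powerset,
    (v (insert j S) - v S) / ((I.card - 1).choose S.card : ℝ)

/-- Marginal utility `ψ(a,b)` of a correct LF joining a coalition with `a` correct and `b`
incorrect LFs, with `C` classes. -/
noncomputable def psi (C a b : ℕ) : ℝ :=
  if a + b = 0 then 1 - 1 / (C : ℝ)
  else ((a : ℝ) + 1) / ((a : ℝ) + (b : ℝ) + 1) - (a : ℝ) / ((a : ℝ) + (b : ℝ))

/-- `SV⁺_{p,w}` (equals `0` when `p = 0` since the outer sum is empty). -/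
noncomputable def SVpos (C p w : ℕ) : ℝ :=
  (1 / ((p : ℝ) + (w : ℝ))) * ∑ i ∈ Finset.range p, ∑ j ∈ Finset.range (w + 1),
    psi C i j * ((p - 1).choose i : ℝ) * (w.choose j : ℝ) / ((p + w - 1).choose (i + j) : ℝ)

/-- `SV⁻_{p,w}`. -/
noncomputable def SVneg (C p w : ℕ) : ℝ :=
  ((p : ℝ) / ((p : ℝ) + (w : ℝ)) - 1 / (C : ℝ) - (p : ℝ) * SVpos C p w) / (w : ℝ)

/-- The MV single-point game: `P` the correct players, `W` the incorrect players,
utility `|S ∩ P|/|S| − 1/C` for nonempty `S`, and `0` on the empty coalition. -/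
noncomputable def mvGame {α : Type*} [DecidableEq α] (C : ℕ) (P W : Finset α)
    (S : Finset α) : ℝ :=
  if S = ∅ then 0 else ((S ∩ P).card : ℝ) / (S.card : ℝ) - 1 / (C : ℝ)

/-- Majority-voting prediction `Θ_S^c(i)`: the fraction of non-abstaining LFs in the
coalition `S` that vote class `c` on training point `i`; `1/C` if all LFs in `S` abstain.
Weak labels are `Option (Fin C)`, with `none` meaning abstention. -/
noncomputable def theta (C n m : ℕ) (L : Fin n → Fin m → Option (Fin C))
    (S : Finset (Fin m)) (c : Fin C) (i : Fin n) : ℝ :=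
  if (S.filter (fun j => L i j ≠ none)).card = 0 then 1 / (C : ℝ)
  else ((S.filter (fun j => L i j = some c)).card : ℝ) /
    ((S.filter (fun j => L i j ≠ none)).card : ℝ)

/-- WeShap weight `φ_{ij}^c`. -/
noncomputable def weshapWeight (C n m : ℕ) (L : Fin n → Fin m → Option (Fin C))
    (i : Fin n) (j : Fin m) (c : Fin C) : ℝ :=
  let p := (Finset.univ.filter (fun k : Fin m => L i k = some c)).card
  let w := (Finset.univ.filter (fun k : Fin m => L i k ≠ none ∧ L i k ≠ some c)).card
  if L i j = some c then SVpos C p w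
  else if L i j = none then 0
  else SVneg C p w

lemma choose_nat_id (s q : ℕ) :
    (s+1) * (s.choose q) * ((s+2).choose (q+1)) = (s+2) * ((s+1).choose q) * ((s+1).choose (q+1)) := by
  have h1 := Nat.add_one_mul_choose_eq (s+1) q
  have h2 := Nat.add_one_mul_choose_eq s q
  apply Nat.eq_of_mul_eq_mul_right (Nat.succ_pos q)
  calc (s+1) * (s.choose q) * ((s+2).choose (q+1)) * (q+1)
      = (s+1) * (s.choose q) * ((s+2).choose (q+1) * (q+1)) := by ring
    _ = (s+1) * (s.choose q) * ((s+2) * ((s+1).choose q)) := by rw [← h1]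
    _ = (s+2) * ((s+1).choose q) * ((s+1) * (s.choose q)) := by ring
    _ = (s+2) * ((s+1).choose q) * ((s+1).choose (q+1) * (q+1)) := by rw [← h2]
    _ = (s+2) * ((s+1).choose q) * ((s+1).choose (q+1)) * (q+1) := by ring

lemma two_term (s q : ℕ) (hq : q ≤ s) :
    (1:ℝ)/(((s+1).choose q : ℕ) : ℝ) + 1/(((s+1).choose (q+1) : ℕ) : ℝ)
      = ((s:ℝ)+2)/(((s:ℝ)+1) * ((s.choose q : ℕ) : ℝ)) := by
  have c0 : (0:ℝ) < (s.choose q : ℝ) := by exact_mod_cast Nat.choose_pos hq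
  have c1 : (0:ℝ) < ((s+1).choose q : ℝ) := by exact_mod_cast Nat.choose_pos (by omega)
  have c2 : (0:ℝ) < ((s+1).choose (q+1) : ℝ) := by exact_mod_cast Nat.choose_pos (by omega)
  have keyR : ((s:ℝ)+1) * (s.choose q : ℝ) * (((s+2).choose (q+1) : ℕ) : ℝ)
      = ((s:ℝ)+2) * ((s+1).choose q : ℝ) * ((s+1).choose (q+1) : ℝ) := by
    exact_mod_cast choose_nat_id s q
  have pasc : (((s+2).choose (q+1) : ℕ) : ℝ) = ((s+1).choose q : ℝ) + ((s+1).choose (q+1) : ℝ) := by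
    exact_mod_cast Nat.choose_succ_succ (s+1) q
  rw [pasc] at keyR
  have hs1 : ((s:ℝ)+1) ≠ 0 := by positivity
  field_simp
  nlinarith [keyR]


lemma pascal_sum (r : ℕ) (g : ℕ → ℝ) :
    ∑ k ∈ Finset.range (r+2), ((r+1).choose k : ℝ) * g k
      = ∑ k ∈ Finset.range (r+1), (r.choose k : ℝ) * g k
        + ∑ k ∈ Finset.range (r+1), (r.choose k : ℝ) * g (k+1) := by
  rw [Finset.sum_range_succ' (fun k => ((r+1).choose k : ℝ) * g k) (r+1)]
  have : ∀ k, (((r+1).choose (k+1) : ℕ) : ℝ) * g (k+1)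
      = (r.choose k : ℝ) * g (k+1) + (r.choose (k+1) : ℝ) * g (k+1) := by
    intro k
    rw [Nat.choose_succ_succ]
    push_cast
    ring
  simp only [this]
  rw [Finset.sum_add_distrib]
  have h2 : ∑ k ∈ Finset.range (r+1), (r.choose (k+1) : ℝ) * g (k+1)
      = ∑ k ∈ Finset.range (r+1), (r.choose k : ℝ) * g k - (r.choose 0 : ℝ) * g 0 := by
    rw [Finset.sum_range_succ' (fun k => (r.choose k : ℝ) * g k) r]
    rw [Finset.sum_range_succ]
    simp [Nat.choose_succ_self]
  rw [h2]
  simp [Nat.choose_zero_right]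
  ring


lemma sum_choose_div (r : ℕ) : ∀ d q : ℕ, q ≤ d →
    ∑ k ∈ Finset.range (r+1), ((r.choose k : ℕ) : ℝ) / (((r+d).choose (q+k) : ℕ) : ℝ)
      = ((r:ℝ)+(d:ℝ)+1)/(((d:ℝ)+1) * ((d.choose q : ℕ) : ℝ)) := by
  induction r with
  | zero =>
    intro d q hq
    have c0 : ((d.choose q : ℕ) : ℝ) ≠ 0 := by exact_mod_cast (Nat.choose_pos hq).ne'
    simp only [Finset.sum_range_one, Nat.choose_zero_right, Nat.cast_one, Nat.zero_add, zero_add,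
      Nat.cast_zero, add_zero]
    rw [eq_div_iff (by positivity)]
    field_simp
  | succ r ih =>
    intro d q hq
    have key : ∑ k ∈ Finset.range (r+2), (((r+1).choose k : ℕ) : ℝ) / (((r+1+d).choose (q+k) : ℕ) : ℝ)
        = ∑ k ∈ Finset.range (r+1), ((r.choose k : ℕ) : ℝ) / (((r+(d+1)).choose (q+k) : ℕ) : ℝ)
          + ∑ k ∈ Finset.range (r+1), ((r.choose k : ℕ) : ℝ) / (((r+(d+1)).choose ((q+1)+k) : ℕ) : ℝ) := by
      have := pascal_sum r (fun k => 1 / (((r+1+d).choose (q+k) : ℕ) : ℝ))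
      simp only [mul_one_div] at this
      rw [this]
      congr 1
      · apply Finset.sum_congr rfl; intro k _; rw [show r+1+d = r+(d+1) by omega]
      · apply Finset.sum_congr rfl; intro k _; rw [show r+1+d = r+(d+1) by omega, show q+(k+1) = q+1+k by omega]
    rw [key, ih (d+1) q (by omega), ih (d+1) (q+1) (by omega)]
    have tt := two_term d q hq
    have c0 : (0:ℝ) < ((d.choose q : ℕ) : ℝ) := by exact_mod_cast Nat.choose_pos hq
    have c1 : (0:ℝ) < (((d+1).choose q : ℕ) : ℝ) := by exact_mod_cast Nat.choose_pos (by omega)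
    have c2 : (0:ℝ) < (((d+1).choose (q+1) : ℕ) : ℝ) := by exact_mod_cast Nat.choose_pos (by omega)
    push_cast at tt ⊢
    have hd1 : ((d:ℝ)+1) ≠ 0 := by positivity
    have hd2 : ((d:ℝ)+2) ≠ 0 := by positivity
    field_simp at tt ⊢
    linear_combination (((r:ℝ))+d+2) * tt


lemma sum_powerset_union' {α : Type*} [DecidableEq α] {A B : Finset α} (h : Disjoint A B)
    (f : Finset α → ℝ) :
    ∑ S ∈ (A ∪ B).powerset, f S = ∑ T ∈ A.powerset, ∑ U ∈ B.powerset, f (T ∪ U) := by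
  rw [← Finset.sum_product']
  apply Finset.sum_nbij' (fun S => (S ∩ A, S ∩ B)) (fun x => x.1 ∪ x.2)
  · intro S hS
    simp only [Finset.mem_product, Finset.mem_powerset] at *
    exact ⟨Finset.inter_subset_right, Finset.inter_subset_right⟩
  · intro x hx
    simp only [Finset.mem_product, Finset.mem_powerset] at *
    exact Finset.union_subset_union hx.1 hx.2
  · intro S hS
    simp only [Finset.mem_powerset] at hS
    rw [← Finset.inter_union_distrib_left]
    exact Finset.inter_eq_left.mpr hS
  · intro x hx
    simp only [Finset.mem_product, Finset.mem_powerset] at hx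
    have d1 : Disjoint x.2 A := h.symm.mono_left hx.2
    have d2 : Disjoint x.1 B := h.mono_left hx.1
    have h1 : (x.1 ∪ x.2) ∩ A = x.1 := by
      rw [Finset.union_inter_distrib_right, Finset.inter_eq_left.mpr hx.1,
        Finset.disjoint_iff_inter_eq_empty.mp d1]
      simp
    have h2 : (x.1 ∪ x.2) ∩ B = x.2 := by
      rw [Finset.union_inter_distrib_right, Finset.inter_eq_left.mpr hx.2,
        Finset.disjoint_iff_inter_eq_empty.mp d2]
      simp
    exact Prod.ext h1 h2
  · intro S hS
    simp only [Finset.mem_powerset] at hS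
    congr 1
    rw [← Finset.inter_union_distrib_left]
    exact (Finset.inter_eq_left.mpr hS).symm


lemma inter_union_eq_of_subset {α : Type*} [DecidableEq α] {A T U : Finset α}
    (hT : T ⊆ A) (hU : Disjoint U A) : (T ∪ U) ∩ A = T := by
  rw [Finset.union_inter_distrib_right, Finset.inter_eq_left.mpr hT,
    Finset.disjoint_iff_inter_eq_empty.mp hU]
  simp

lemma sum_powerset_tripartite {α : Type*} [DecidableEq α] (A B R : Finset α)
    (hAB : Disjoint A B) (hAR : Disjoint A R) (hBR : Disjoint B R) (h : ℕ → ℕ → ℕ → ℝ) :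
    ∑ S ∈ (A ∪ B ∪ R).powerset, h (S ∩ A).card (S ∩ B).card (S ∩ R).card
      = ∑ a ∈ range (A.card+1), ∑ b ∈ range (B.card+1), ∑ k ∈ range (R.card+1),
          (A.card.choose a : ℝ) * (B.card.choose b : ℝ) * (R.card.choose k : ℝ) * h a b k := by
  rw [sum_powerset_union' (by simp [Finset.disjoint_union_left, hAR, hBR])]
  have step1 : ∀ T ∈ (A ∪ B).powerset,
      ∑ V ∈ R.powerset, h ((T ∪ V) ∩ A).card ((T ∪ V) ∩ B).card ((T ∪ V) ∩ R).card
        = ∑ k ∈ range (R.card+1), (R.card.choose k : ℝ) * h (T ∩ A).card (T ∩ B).card k := by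
    intro T hT
    rw [Finset.mem_powerset] at hT
    have hTA : (∀ V ∈ R.powerset, (T ∪ V) ∩ A = T ∩ A ∧ (T ∪ V) ∩ B = T ∩ B ∧ (T ∪ V) ∩ R = V) := by
      intro V hV
      rw [Finset.mem_powerset] at hV
      refine ⟨?_, ?_, ?_⟩
      · rw [Finset.union_inter_distrib_right,
          Finset.disjoint_iff_inter_eq_empty.mp (hAR.symm.mono_left hV)]
        simp
      · rw [Finset.union_inter_distrib_right,
          Finset.disjoint_iff_inter_eq_empty.mp (hBR.symm.mono_left hV)]
        simp
      · have hTR : Disjoint T R := (Finset.disjoint_union_left.mpr ⟨hAR, hBR⟩).mono_left hT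
        rw [Finset.union_inter_distrib_right, Finset.disjoint_iff_inter_eq_empty.mp hTR,
          Finset.inter_eq_left.mpr hV]
        simp
    calc ∑ V ∈ R.powerset, h ((T ∪ V) ∩ A).card ((T ∪ V) ∩ B).card ((T ∪ V) ∩ R).card
        = ∑ V ∈ R.powerset, h (T ∩ A).card (T ∩ B).card V.card := by
          apply Finset.sum_congr rfl
          intro V hV
          obtain ⟨e1, e2, e3⟩ := hTA V hV
          rw [e1, e2, e3]
      _ = ∑ k ∈ range (R.card+1), (R.card.choose k : ℝ) * h (T ∩ A).card (T ∩ B).card k := by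
          rw [Finset.sum_powerset_apply_card (fun c => h (T ∩ A).card (T ∩ B).card c)]
          simp [nsmul_eq_mul]
  rw [Finset.sum_congr rfl step1]
  rw [sum_powerset_union' hAB]
  have step2 : ∀ T1 ∈ A.powerset, ∀ T2 ∈ B.powerset,
      (T1 ∪ T2) ∩ A = T1 ∧ (T1 ∪ T2) ∩ B = T2 := by
    intro T1 h1 T2 h2
    rw [Finset.mem_powerset] at h1 h2
    exact ⟨inter_union_eq_of_subset h1 (hAB.symm.mono_left h2),
      by rw [Finset.union_comm]; exact inter_union_eq_of_subset h2 (hAB.mono_left h1)⟩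
  calc ∑ T1 ∈ A.powerset, ∑ T2 ∈ B.powerset, ∑ k ∈ range (R.card+1),
        (R.card.choose k : ℝ) * h ((T1 ∪ T2) ∩ A).card ((T1 ∪ T2) ∩ B).card k
      = ∑ T1 ∈ A.powerset, ∑ T2 ∈ B.powerset, ∑ k ∈ range (R.card+1),
        (R.card.choose k : ℝ) * h T1.card T2.card k := by
        apply Finset.sum_congr rfl; intro T1 h1
        apply Finset.sum_congr rfl; intro T2 h2
        obtain ⟨e1, e2⟩ := step2 T1 h1 T2 h2
        rw [e1, e2]
    _ = ∑ T1 ∈ A.powerset, ∑ b ∈ range (B.card+1), (B.card.choose b : ℝ) *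
          ∑ k ∈ range (R.card+1), (R.card.choose k : ℝ) * h T1.card b k := by
        apply Finset.sum_congr rfl; intro T1 _
        rw [Finset.sum_powerset_apply_card
          (fun c => ∑ k ∈ range (R.card+1), (R.card.choose k : ℝ) * h T1.card c k)]
        simp [nsmul_eq_mul, Finset.mul_sum]
    _ = ∑ a ∈ range (A.card+1), (A.card.choose a : ℝ) * ∑ b ∈ range (B.card+1),
          (B.card.choose b : ℝ) * ∑ k ∈ range (R.card+1), (R.card.choose k : ℝ) * h a b k := by
        rw [Finset.sum_powerset_apply_card
          (fun c => ∑ b ∈ range (B.card+1), (B.card.choose b : ℝ) *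
            ∑ k ∈ range (R.card+1), (R.card.choose k : ℝ) * h c b k)]
        simp [nsmul_eq_mul, Finset.mul_sum]
    _ = _ := by
        apply Finset.sum_congr rfl; intro a _
        rw [Finset.mul_sum]
        apply Finset.sum_congr rfl; intro b _
        rw [Finset.mul_sum, Finset.mul_sum]
        apply Finset.sum_congr rfl; intro k _
        ring


lemma shap_formula {α : Type*} [Fintype α] [DecidableEq α] (A B R : Finset α) (j : α)
    (v : Finset α → ℝ) (D : ℕ → ℕ → ℝ)
    (hpart : (Finset.univ : Finset α).erase j = A ∪ B ∪ R)
    (hAB : Disjoint A B) (hAR : Disjoint A R) (hBR : Disjoint B R)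
    (hD : ∀ S ∈ ((Finset.univ : Finset α).erase j).powerset,
       v (insert j S) - v S = D (S ∩ A).card (S ∩ B).card) :
    shapley Finset.univ v j
      = (1/((A.card:ℝ)+(B.card:ℝ)+1)) * ∑ a ∈ range (A.card+1), ∑ b ∈ range (B.card+1),
          D a b * (A.card.choose a : ℝ) * (B.card.choose b : ℝ)
            / (((A.card+B.card).choose (a+b) : ℕ) : ℝ) := by
  have hcardU : (Finset.univ : Finset α).card = A.card + B.card + R.card + 1 := by
    have h1 : ((Finset.univ : Finset α).erase j).card = (Finset.univ : Finset α).card - 1 :=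
      Finset.card_erase_of_mem (Finset.mem_univ j)
    have h2 : (A ∪ B ∪ R).card = A.card + B.card + R.card := by
      rw [Finset.card_union_of_disjoint (by simp [Finset.disjoint_union_left, hAR, hBR]),
        Finset.card_union_of_disjoint hAB]
    have h3 : 1 ≤ (Finset.univ : Finset α).card :=
      Finset.card_pos.mpr ⟨j, Finset.mem_univ j⟩
    have h4 : ((Finset.univ : Finset α).erase j).card = (A ∪ B ∪ R).card := by rw [hpart]
    omega
  set M : ℕ := A.card + B.card + R.card with hM
  rw [shapley, hcardU]
  have hsub : A.card + B.card + R.card + 1 - 1 = M := by omega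
  rw [hsub]
  have hsum : ∑ S ∈ ((Finset.univ : Finset α).erase j).powerset,
      (v (insert j S) - v S) / ((M.choose S.card : ℕ) : ℝ)
      = ∑ S ∈ (A ∪ B ∪ R).powerset,
        D (S ∩ A).card (S ∩ B).card / ((M.choose ((S ∩ A).card + (S ∩ B).card + (S ∩ R).card) : ℕ) : ℝ) := by
    rw [hpart] at hD ⊢
    apply Finset.sum_congr rfl
    intro S hS
    rw [hD S hS]
    congr 2
    rw [Finset.mem_powerset] at hS
    have hdecomp : S = (S ∩ A) ∪ (S ∩ B) ∪ (S ∩ R) := by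
      rw [← Finset.inter_union_distrib_left, ← Finset.inter_union_distrib_left]
      exact (Finset.inter_eq_left.mpr hS).symm
    conv_lhs => rw [hdecomp]
    rw [Finset.card_union_of_disjoint, Finset.card_union_of_disjoint]
    · exact hAB.mono Finset.inter_subset_right Finset.inter_subset_right
    · refine Finset.disjoint_union_left.mpr ⟨?_, ?_⟩
      · exact hAR.mono Finset.inter_subset_right Finset.inter_subset_right
      · exact hBR.mono Finset.inter_subset_right Finset.inter_subset_right
  rw [hsum]
  rw [sum_powerset_tripartite A B R hAB hAR hBR
    (fun a b k => D a b / ((M.choose (a+b+k) : ℕ) : ℝ))]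
  have hinner : ∀ a ∈ range (A.card+1), ∀ b ∈ range (B.card+1),
      ∑ k ∈ range (R.card+1), (A.card.choose a : ℝ) * (B.card.choose b : ℝ) *
        (R.card.choose k : ℝ) * (D a b / ((M.choose (a+b+k) : ℕ) : ℝ))
      = (A.card.choose a : ℝ) * (B.card.choose b : ℝ) * D a b *
        (((R.card:ℝ)+(A.card:ℝ)+(B.card:ℝ)+1)
          /((((A.card:ℝ)+(B.card:ℝ))+1) * (((A.card+B.card).choose (a+b) : ℕ) : ℝ))) := by
    intro a ha b hb
    rw [Finset.mem_range] at ha hb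
    have key := sum_choose_div R.card (A.card + B.card) (a+b) (by omega)
    have : ∀ k, M.choose (a+b+k) = (R.card + (A.card + B.card)).choose ((a+b)+k) := by
      intro k; congr 1 <;> omega
    calc ∑ k ∈ range (R.card+1), (A.card.choose a : ℝ) * (B.card.choose b : ℝ) *
          (R.card.choose k : ℝ) * (D a b / ((M.choose (a+b+k) : ℕ) : ℝ))
        = (A.card.choose a : ℝ) * (B.card.choose b : ℝ) * D a b *
          ∑ k ∈ range (R.card+1),
            ((R.card.choose k : ℕ) : ℝ) / (((R.card + (A.card+B.card)).choose ((a+b)+k) : ℕ) : ℝ) := by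
          rw [Finset.mul_sum]
          apply Finset.sum_congr rfl
          intro k _
          rw [this k]
          ring
      _ = _ := by
          rw [key]
          push_cast
          ring
  rw [Finset.sum_congr rfl (fun a ha => Finset.sum_congr rfl (fun b hb => hinner a ha b hb))]
  rw [Finset.mul_sum]
  conv_rhs => rw [Finset.mul_sum]
  apply Finset.sum_congr rfl
  intro a ha
  rw [Finset.mul_sum]
  conv_rhs => rw [Finset.mul_sum]
  apply Finset.sum_congr rfl
  intro b hb
  rw [Finset.mem_range] at ha hb
  have hC : (0:ℝ) < (((A.card+B.card).choose (a+b) : ℕ) : ℝ) := by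
    exact_mod_cast Nat.choose_pos (by omega)
  have hM1 : ((M:ℝ)+1) ≠ 0 := by positivity
  have hd1 : ((A.card:ℝ)+(B.card:ℝ)+1) ≠ 0 := by positivity
  have hMeq : (M:ℝ) = (A.card:ℝ)+(B.card:ℝ)+(R.card:ℝ) := by
    rw [hM]; push_cast; ring
  push_cast
  rw [hMeq]
  field_simp
  ring


lemma shapley_efficiency {α : Type*} [Fintype α] [DecidableEq α] [Nonempty α]
    (v : Finset α → ℝ) :
    ∑ j : α, shapley Finset.univ v j = v Finset.univ - v ∅ := by
  classical
  set m := (Finset.univ : Finset α).card with hm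
  have hm1 : 1 ≤ m := Finset.card_pos.mpr Finset.univ_nonempty
  have hmR : ((m:ℝ)) ≠ 0 := by positivity
  have expand : ∑ j : α, shapley Finset.univ v j
      = (1/(m:ℝ)) * ∑ j : α, ∑ S ∈ ((Finset.univ : Finset α).erase j).powerset,
          (v (insert j S) - v S) / (((m-1).choose S.card : ℕ) : ℝ) := by
    rw [Finset.mul_sum]
    rfl
  rw [expand]
  have split : ∀ j : α, ∑ S ∈ ((Finset.univ : Finset α).erase j).powerset,
      (v (insert j S) - v S) / (((m-1).choose S.card : ℕ) : ℝ)
      = (∑ S ∈ ((Finset.univ : Finset α).erase j).powerset,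
          v (insert j S) / (((m-1).choose S.card : ℕ) : ℝ))
        - ∑ S ∈ ((Finset.univ : Finset α).erase j).powerset,
          v S / (((m-1).choose S.card : ℕ) : ℝ) := by
    intro j
    rw [← Finset.sum_sub_distrib]
    apply Finset.sum_congr rfl
    intro S _
    ring
  simp only [split]
  rw [Finset.sum_sub_distrib]
  -- Sum1
  have sum1 : ∑ j : α, ∑ S ∈ ((Finset.univ : Finset α).erase j).powerset,
      v (insert j S) / (((m-1).choose S.card : ℕ) : ℝ)
      = ∑ T ∈ (Finset.univ : Finset α).powerset,
          (T.card : ℝ) * v T / (((m-1).choose (T.card - 1) : ℕ) : ℝ) := by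
    have inner : ∀ j : α, ∑ S ∈ ((Finset.univ : Finset α).erase j).powerset,
        v (insert j S) / (((m-1).choose S.card : ℕ) : ℝ)
        = ∑ T ∈ (Finset.univ : Finset α).powerset.filter (fun T => j ∈ T),
            v T / (((m-1).choose (T.card - 1) : ℕ) : ℝ) := by
      intro j
      apply Finset.sum_nbij' (fun S => insert j S) (fun T => T.erase j)
      · intro S hS
        simp only [Finset.mem_powerset, Finset.mem_filter] at *
        exact ⟨Finset.subset_univ _, Finset.mem_insert_self j S⟩
      · intro T hT
        simp only [Finset.mem_powerset, Finset.mem_filter] at *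
        exact Finset.erase_subset_erase j (Finset.subset_univ T)
      · intro S hS
        simp only [Finset.mem_powerset] at hS
        have : j ∉ S := fun h => (Finset.mem_erase.mp (hS h)).1 rfl
        exact Finset.erase_insert this
      · intro T hT
        simp only [Finset.mem_powerset, Finset.mem_filter] at hT
        exact Finset.insert_erase hT.2
      · intro S hS
        simp only [Finset.mem_powerset] at hS
        have hjS : j ∉ S := fun h => (Finset.mem_erase.mp (hS h)).1 rfl
        have : (insert j S).card = S.card + 1 := Finset.card_insert_of_notMem hjS
        rw [this]
        simp
    simp only [inner]
    have hcond1 : ∀ (j : α) (T : Finset α),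
        j ∈ (Finset.univ : Finset α) ∧ T ∈ (Finset.univ : Finset α).powerset.filter (fun T => j ∈ T)
        ↔ j ∈ T ∧ T ∈ (Finset.univ : Finset α).powerset := by
      intro j T
      simp only [Finset.mem_filter, Finset.mem_powerset, Finset.mem_univ, true_and,
        Finset.subset_univ, and_true, true_and]
    rw [Finset.sum_comm' hcond1]
    apply Finset.sum_congr rfl
    intro T _
    rw [Finset.sum_const, nsmul_eq_mul]
    ring
  -- Sum2
  have sum2 : ∑ j : α, ∑ S ∈ ((Finset.univ : Finset α).erase j).powerset,
      v S / (((m-1).choose S.card : ℕ) : ℝ)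
      = ∑ T ∈ (Finset.univ : Finset α).powerset,
          ((m:ℝ) - T.card) * v T / (((m-1).choose T.card : ℕ) : ℝ) := by
    have hcond2 : ∀ (j : α) (S : Finset α),
        j ∈ (Finset.univ : Finset α) ∧ S ∈ ((Finset.univ : Finset α).erase j).powerset
        ↔ j ∈ (Finset.univ : Finset α) \ S ∧ S ∈ (Finset.univ : Finset α).powerset := by
      intro j S
      simp only [Finset.mem_univ, true_and, Finset.mem_powerset, Finset.mem_sdiff,
        Finset.subset_univ, true_and]
      rw [Finset.subset_erase]
      simp
    rw [Finset.sum_comm' hcond2]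
    apply Finset.sum_congr rfl
    intro T hT
    rw [Finset.sum_const, nsmul_eq_mul]
    rw [Finset.mem_powerset] at hT
    rw [Finset.card_sdiff_of_subset (Finset.subset_univ T), ← hm]
    have hTm : T.card ≤ m := by rw [hm]; exact Finset.card_le_card (Finset.subset_univ T)
    push_cast [Nat.cast_sub hTm]
    ring
  rw [sum1, sum2, ← Finset.sum_sub_distrib]
  -- coefficient analysis
  have key : ∀ T ∈ (Finset.univ : Finset α).powerset,
      (T.card : ℝ) * v T / (((m-1).choose (T.card - 1) : ℕ) : ℝ)
        - ((m:ℝ) - T.card) * v T / (((m-1).choose T.card : ℕ) : ℝ)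
      = if T = Finset.univ then (m:ℝ) * v T else if T = ∅ then -((m:ℝ) * v T) else 0 := by
    intro T hT
    rw [Finset.mem_powerset] at hT
    by_cases hTu : T = Finset.univ
    · subst hTu
      rw [if_pos rfl]
      have hcard : (Finset.univ : Finset α).card = m := rfl
      have e1 : (m-1).choose ((Finset.univ : Finset α).card - 1) = 1 := by
        rw [hcard]; exact Nat.choose_self _
      rw [e1, hcard]
      push_cast
      ring
    · rw [if_neg hTu]
      by_cases hTe : T = ∅
      · subst hTe
        simp
      · rw [if_neg hTe]
        have ht1 : 1 ≤ T.card := Finset.card_pos.mpr (Finset.nonempty_of_ne_empty hTe)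
        have ht2 : T.card ≤ m - 1 := by
          have : T.card < m := Finset.card_lt_card (Finset.ssubset_univ_iff.mpr hTu)
          omega
        have c1 : 0 < (m-1).choose (T.card - 1) := Nat.choose_pos (by omega)
        have c2 : 0 < (m-1).choose T.card := Nat.choose_pos ht2
        have cross : (m-1).choose T.card * T.card = (m-1).choose (T.card - 1) * (m - T.card) := by
          have := Nat.choose_succ_right_eq (m-1) (T.card - 1)
          rw [show T.card - 1 + 1 = T.card by omega] at this
          rw [this]
          congr 1
          omega
        have c1R : (0:ℝ) < (((m-1).choose (T.card - 1) : ℕ) : ℝ) := by exact_mod_cast c1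
        have c2R : (0:ℝ) < (((m-1).choose T.card : ℕ) : ℝ) := by exact_mod_cast c2
        have crossR : (((m-1).choose T.card : ℕ) : ℝ) * (T.card : ℝ)
            = (((m-1).choose (T.card - 1) : ℕ) : ℝ) * ((m:ℝ) - (T.card:ℝ)) := by
          have htm : (T.card:ℝ) ≤ (m:ℝ) := by exact_mod_cast ht2.trans (by omega)
          have : ((m - T.card : ℕ) : ℝ) = (m:ℝ) - (T.card:ℝ) := by
            push_cast [Nat.cast_sub (by omega : T.card ≤ m)]
            ring
          rw [← this]
          exact_mod_cast cross
        field_simp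
        linear_combination v T * crossR
  rw [Finset.sum_congr rfl key]
  have huniv_mem : (Finset.univ : Finset α) ∈ (Finset.univ : Finset α).powerset :=
    Finset.mem_powerset_self _
  rw [← Finset.add_sum_erase _ _ huniv_mem]
  have hempty_mem : (∅ : Finset α) ∈ ((Finset.univ : Finset α).powerset.erase Finset.univ) := by
    rw [Finset.mem_erase]
    exact ⟨fun h => Finset.univ_nonempty.ne_empty h.symm, Finset.empty_mem_powerset _⟩
  rw [← Finset.add_sum_erase _ _ hempty_mem]
  have hrest : ∑ T ∈ (((Finset.univ : Finset α).powerset.erase Finset.univ).erase ∅),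
      (if T = Finset.univ then (m:ℝ) * v T else if T = ∅ then -((m:ℝ) * v T) else 0) = 0 := by
    apply Finset.sum_eq_zero
    intro T hT
    rw [Finset.mem_erase, Finset.mem_erase] at hT
    rw [if_neg hT.2.1, if_neg hT.1]
  rw [hrest]
  rw [if_pos rfl, if_neg (Ne.symm (Finset.univ_nonempty.ne_empty)), if_pos rfl]
  field_simp
  ring


section helpers
variable {C n m : ℕ} (L : Fin n → Fin m → Option (Fin C)) (y : Fin C) (i : Fin n)

lemma filter_eq_inter_P (S : Finset (Fin m)) :
    S.filter (fun k => L i k = some y) = S ∩ (Finset.univ.filter (fun k => L i k = some y)) := by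
  ext k; simp

lemma filter_ne_inter (S : Finset (Fin m)) :
    S.filter (fun k => L i k ≠ none)
      = (S ∩ (Finset.univ.filter (fun k => L i k = some y)))
        ∪ (S ∩ (Finset.univ.filter (fun k => L i k ≠ none ∧ L i k ≠ some y))) := by
  ext k
  simp only [Finset.mem_filter, Finset.mem_union, Finset.mem_inter, Finset.mem_univ, true_and]
  constructor
  · rintro ⟨hk, hne⟩
    by_cases h1 : L i k = some y
    · exact Or.inl ⟨hk, h1⟩
    · exact Or.inr ⟨hk, hne, h1⟩
  · rintro (⟨hk, h1⟩ | ⟨hk, h2, -⟩)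
    · exact ⟨hk, fun hn => Option.some_ne_none _ (h1 ▸ hn)⟩
    · exact ⟨hk, h2⟩

lemma disjPW : Disjoint (Finset.univ.filter (fun k : Fin m => L i k = some y))
    (Finset.univ.filter (fun k : Fin m => L i k ≠ none ∧ L i k ≠ some y)) := by
  rw [Finset.disjoint_left]
  intro k hk hk'
  simp only [Finset.mem_filter, Finset.mem_univ, true_and] at hk hk'
  exact hk'.2 hk

lemma disjPR : Disjoint (Finset.univ.filter (fun k : Fin m => L i k = some y))
    (Finset.univ.filter (fun k : Fin m => L i k = none)) := by
  rw [Finset.disjoint_left]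
  intro k hk hk'
  simp only [Finset.mem_filter, Finset.mem_univ, true_and] at hk hk'
  rw [hk] at hk'; exact Option.some_ne_none _ hk'

lemma disjWR : Disjoint (Finset.univ.filter (fun k : Fin m => L i k ≠ none ∧ L i k ≠ some y))
    (Finset.univ.filter (fun k : Fin m => L i k = none)) := by
  rw [Finset.disjoint_left]
  intro k hk hk'
  simp only [Finset.mem_filter, Finset.mem_univ, true_and] at hk hk'
  exact hk.1 hk'

lemma univ_eq_PWR : (Finset.univ : Finset (Fin m))
    = (Finset.univ.filter (fun k : Fin m => L i k = some y))
      ∪ (Finset.univ.filter (fun k : Fin m => L i k ≠ none ∧ L i k ≠ some y))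
      ∪ (Finset.univ.filter (fun k : Fin m => L i k = none)) := by
  ext k
  simp only [Finset.mem_univ, Finset.mem_union, Finset.mem_filter, true_and, true_iff]
  by_cases h1 : L i k = some y
  · exact Or.inl (Or.inl h1)
  · by_cases h2 : L i k = none
    · exact Or.inr h2
    · exact Or.inl (Or.inr ⟨h2, h1⟩)

lemma card_filter_ne (S : Finset (Fin m)) :
    (S.filter (fun k => L i k ≠ none)).card
      = (S ∩ (Finset.univ.filter (fun k => L i k = some y))).card
        + (S ∩ (Finset.univ.filter (fun k => L i k ≠ none ∧ L i k ≠ some y))).card := by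
  rw [filter_ne_inter L y i S]
  exact Finset.card_union_of_disjoint
    ((disjPW L y i).mono Finset.inter_subset_right Finset.inter_subset_right)

end helpers



noncomputable def psiN (C a b : ℕ) : ℝ :=
  if a + b = 0 then -(1 / (C : ℝ))
  else (a : ℝ) / ((a : ℝ) + (b : ℝ) + 1) - (a : ℝ) / ((a : ℝ) + (b : ℝ))

noncomputable def Efun (C p w : ℕ) : ℝ :=
  (1 / ((p : ℝ) + (w : ℝ))) * ∑ a ∈ Finset.range (p + 1), ∑ b ∈ Finset.range w,
    psiN C a b * (p.choose a : ℝ) * ((w - 1).choose b : ℝ) / ((p + w - 1).choose (a + b) : ℝ)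

section point
variable {C n m : ℕ} {L : Fin n → Fin m → Option (Fin C)} {y : Fin C} {i : Fin n} {j : Fin m}

lemma shap_correct (hj : L i j = some y) :
    shapley Finset.univ (fun S => theta C n m L S y i) j
      = SVpos C (Finset.univ.filter (fun k => L i k = some y)).card
          (Finset.univ.filter (fun k => L i k ≠ none ∧ L i k ≠ some y)).card := by
  classical
  set P := Finset.univ.filter (fun k : Fin m => L i k = some y) with hP
  set W := Finset.univ.filter (fun k : Fin m => L i k ≠ none ∧ L i k ≠ some y) with hW
  set R := Finset.univ.filter (fun k : Fin m => L i k = none) with hR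
  have hjP : j ∈ P := by rw [hP]; simp [hj]
  have hjW : j ∉ W := by rw [hW]; simp [hj]
  have hjR : j ∉ R := by rw [hR]; simp [hj]
  have hp1 : 1 ≤ P.card := Finset.card_pos.mpr ⟨j, hjP⟩
  have hpart : (Finset.univ : Finset (Fin m)).erase j = P.erase j ∪ W ∪ R := by
    conv_lhs => rw [univ_eq_PWR L y i]
    ext k
    by_cases hk : k = j
    · subst hk
      simp [Finset.mem_erase, hjW, hjR]
    · simp only [Finset.mem_erase, hk, Ne, not_false_iff, true_and, Finset.mem_union]
      exact Iff.rfl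
  have hD : ∀ S ∈ ((Finset.univ : Finset (Fin m)).erase j).powerset,
      (fun S => theta C n m L S y i) (insert j S) - (fun S => theta C n m L S y i) S
        = psi C (S ∩ P.erase j).card (S ∩ W).card := by
    intro S hS
    rw [Finset.mem_powerset] at hS
    have hjS : j ∉ S := fun h => (Finset.mem_erase.mp (hS h)).1 rfl
    have e0 : S ∩ P.erase j = S ∩ P := by
      ext k
      simp only [Finset.mem_inter, Finset.mem_erase]
      exact ⟨fun h => ⟨h.1, h.2.2⟩, fun h => ⟨h.1, fun he => hjS (he ▸ h.1), h.2⟩⟩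
    rw [e0]
    have hfy : (S.filter (fun k => L i k = some y)).card = (S ∩ P).card := by
      rw [filter_eq_inter_P]
    have hfn : (S.filter (fun k => L i k ≠ none)).card = (S ∩ P).card + (S ∩ W).card :=
      card_filter_ne L y i S
    have hjSf : j ∉ S.filter (fun k => L i k = some y) :=
      fun h => hjS (Finset.mem_of_mem_filter j h)
    have hjSf2 : j ∉ S.filter (fun k => L i k ≠ none) :=
      fun h => hjS (Finset.mem_of_mem_filter j h)
    have hins_y : ((insert j S).filter (fun k => L i k = some y)).card = (S ∩ P).card + 1 := by
      rw [Finset.filter_insert, if_pos hj, Finset.card_insert_of_notMem hjSf, hfy]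
    have hins_n : ((insert j S).filter (fun k => L i k ≠ none)).card
        = (S ∩ P).card + (S ∩ W).card + 1 := by
      rw [Finset.filter_insert, if_pos (by simp [hj]), Finset.card_insert_of_notMem hjSf2, hfn]
    simp only [theta, hins_y, hins_n, hfy, hfn, psi]
    set a := (S ∩ P).card
    set b := (S ∩ W).card
    rw [if_neg (Nat.succ_ne_zero _)]
    by_cases hab : a + b = 0
    · have ha : a = 0 := by omega
      have hb : b = 0 := by omega
      rw [if_pos hab, if_pos hab, ha, hb]
      norm_num
    · rw [if_neg hab, if_neg hab]
      push_cast
      ring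
  rw [shap_formula (P.erase j) W R j _ (psi C) hpart
    ((disjPW L y i).mono_left (Finset.erase_subset j P))
    ((disjPR L y i).mono_left (Finset.erase_subset j P)) (disjWR L y i) hD]
  rw [Finset.card_erase_of_mem hjP]
  rw [show P.card - 1 + 1 = P.card from by omega,
    show P.card - 1 + W.card = P.card + W.card - 1 from by omega]
  rw [SVpos]
  congr 1
  rw [Nat.cast_sub hp1]
  push_cast
  ring


lemma shap_abstain (hj : L i j = none) :
    shapley Finset.univ (fun S => theta C n m L S y i) j = 0 := by
  rw [shapley]
  have : ∀ S ∈ ((Finset.univ : Finset (Fin m)).erase j).powerset,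
      ((fun S => theta C n m L S y i) (insert j S) - (fun S => theta C n m L S y i) S)
        / ((((Finset.univ : Finset (Fin m)).card - 1).choose S.card : ℕ) : ℝ) = 0 := by
    intro S hS
    have e1 : (insert j S).filter (fun k => L i k ≠ none) = S.filter (fun k => L i k ≠ none) := by
      rw [Finset.filter_insert, if_neg (by simp [hj])]
    have e2 : (insert j S).filter (fun k => L i k = some y)
        = S.filter (fun k => L i k = some y) := by
      rw [Finset.filter_insert, if_neg (by simp [hj])]
    simp only [theta, e1, e2, sub_self, zero_div]
  rw [Finset.sum_congr rfl this]
  simp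

lemma shap_wrong (hjn : L i j ≠ none) (hjy : L i j ≠ some y) :
    shapley Finset.univ (fun S => theta C n m L S y i) j
      = Efun C (Finset.univ.filter (fun k => L i k = some y)).card
          (Finset.univ.filter (fun k => L i k ≠ none ∧ L i k ≠ some y)).card := by
  classical
  set P := Finset.univ.filter (fun k : Fin m => L i k = some y) with hP
  set W := Finset.univ.filter (fun k : Fin m => L i k ≠ none ∧ L i k ≠ some y) with hW
  set R := Finset.univ.filter (fun k : Fin m => L i k = none) with hR
  have hjW : j ∈ W := by rw [hW]; simp [hjn, hjy]
  have hjP : j ∉ P := by rw [hP]; simp [hjy]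
  have hjR : j ∉ R := by rw [hR]; simp [hjn]
  have hw1 : 1 ≤ W.card := Finset.card_pos.mpr ⟨j, hjW⟩
  have hpart : (Finset.univ : Finset (Fin m)).erase j = P ∪ W.erase j ∪ R := by
    conv_lhs => rw [univ_eq_PWR L y i]
    ext k
    by_cases hk : k = j
    · subst hk
      simp [Finset.mem_erase, hjP, hjR]
    · simp only [Finset.mem_erase, hk, Ne, not_false_iff, true_and, Finset.mem_union]
      exact Iff.rfl
  have hD : ∀ S ∈ ((Finset.univ : Finset (Fin m)).erase j).powerset,
      (fun S => theta C n m L S y i) (insert j S) - (fun S => theta C n m L S y i) S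
        = psiN C (S ∩ P).card (S ∩ W.erase j).card := by
    intro S hS
    rw [Finset.mem_powerset] at hS
    have hjS : j ∉ S := fun h => (Finset.mem_erase.mp (hS h)).1 rfl
    have e0 : S ∩ W.erase j = S ∩ W := by
      ext k
      simp only [Finset.mem_inter, Finset.mem_erase]
      exact ⟨fun h => ⟨h.1, h.2.2⟩, fun h => ⟨h.1, fun he => hjS (he ▸ h.1), h.2⟩⟩
    rw [e0]
    have hfy : (S.filter (fun k => L i k = some y)).card = (S ∩ P).card := by
      rw [filter_eq_inter_P]
    have hfn : (S.filter (fun k => L i k ≠ none)).card = (S ∩ P).card + (S ∩ W).card :=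
      card_filter_ne L y i S
    have hjSf2 : j ∉ S.filter (fun k => L i k ≠ none) :=
      fun h => hjS (Finset.mem_of_mem_filter j h)
    have hins_y : ((insert j S).filter (fun k => L i k = some y)).card = (S ∩ P).card := by
      rw [Finset.filter_insert, if_neg hjy, hfy]
    have hins_n : ((insert j S).filter (fun k => L i k ≠ none)).card
        = (S ∩ P).card + (S ∩ W).card + 1 := by
      rw [Finset.filter_insert, if_pos hjn, Finset.card_insert_of_notMem hjSf2, hfn]
    simp only [theta, hins_y, hins_n, hfy, hfn, psiN]
    set a := (S ∩ P).card
    set b := (S ∩ W).card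
    rw [if_neg (Nat.succ_ne_zero _)]
    by_cases hab : a + b = 0
    · have ha : a = 0 := by omega
      have hb : b = 0 := by omega
      rw [if_pos hab, if_pos hab, ha, hb]
      norm_num
    · rw [if_neg hab, if_neg hab]
      push_cast
      ring
  rw [shap_formula P (W.erase j) R j _ (psiN C) hpart
    ((disjPW L y i).mono_right (Finset.erase_subset j W))
    (disjPR L y i) ((disjWR L y i).mono_left (Finset.erase_subset j W)) hD]
  rw [Finset.card_erase_of_mem hjW]
  rw [show W.card - 1 + 1 = W.card from by omega,
    show P.card + (W.card - 1) = P.card + W.card - 1 from by omega]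
  rw [Efun]
  congr 1
  rw [Nat.cast_sub hw1]
  push_cast
  ring


lemma theta_empty : theta C n m L ∅ y i = 1 / (C : ℝ) := by
  simp [theta]

lemma theta_univ_val
    (hpw : (Finset.univ.filter (fun k : Fin m => L i k = some y)).card
      + (Finset.univ.filter (fun k : Fin m => L i k ≠ none ∧ L i k ≠ some y)).card ≠ 0) :
    theta C n m L Finset.univ y i
      = ((Finset.univ.filter (fun k : Fin m => L i k = some y)).card : ℝ)
        / (((Finset.univ.filter (fun k : Fin m => L i k = some y)).card : ℝ)
          + ((Finset.univ.filter (fun k : Fin m => L i k ≠ none ∧ L i k ≠ some y)).card : ℝ)) := by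
  have hfn : ((Finset.univ : Finset (Fin m)).filter (fun k => L i k ≠ none)).card
      = (Finset.univ.filter (fun k : Fin m => L i k = some y)).card
        + (Finset.univ.filter (fun k : Fin m => L i k ≠ none ∧ L i k ≠ some y)).card := by
    have := card_filter_ne L y i (Finset.univ : Finset (Fin m))
    simpa [Finset.univ_inter] using this
  have hfy : ((Finset.univ : Finset (Fin m)).filter (fun k => L i k = some y)).card
      = (Finset.univ.filter (fun k : Fin m => L i k = some y)).card := rfl
  rw [theta, hfn, if_neg hpw, hfy]
  push_cast
  ring

lemma efun_eq_svneg (hjn : L i j ≠ none) (hjy : L i j ≠ some y) :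
    Efun C (Finset.univ.filter (fun k : Fin m => L i k = some y)).card
        (Finset.univ.filter (fun k : Fin m => L i k ≠ none ∧ L i k ≠ some y)).card
      = SVneg C (Finset.univ.filter (fun k : Fin m => L i k = some y)).card
        (Finset.univ.filter (fun k : Fin m => L i k ≠ none ∧ L i k ≠ some y)).card := by
  classical
  haveI : Nonempty (Fin m) := ⟨j⟩
  set P := Finset.univ.filter (fun k : Fin m => L i k = some y) with hP
  set W := Finset.univ.filter (fun k : Fin m => L i k ≠ none ∧ L i k ≠ some y) with hW
  set R := Finset.univ.filter (fun k : Fin m => L i k = none) with hR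
  have hjW : j ∈ W := by rw [hW]; simp [hjn, hjy]
  have hw1 : 1 ≤ W.card := Finset.card_pos.mpr ⟨j, hjW⟩
  have heff := shapley_efficiency (fun S => theta C n m L S y i)
  have hsplit : ∑ j' : Fin m, shapley Finset.univ (fun S => theta C n m L S y i) j'
      = (P.card : ℝ) * SVpos C P.card W.card + (W.card : ℝ) * Efun C P.card W.card := by
    calc ∑ j' : Fin m, shapley Finset.univ (fun S => theta C n m L S y i) j'
        = ∑ j' ∈ P ∪ W ∪ R, shapley Finset.univ (fun S => theta C n m L S y i) j' := by
          rw [← univ_eq_PWR L y i]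
      _ = (∑ j' ∈ P ∪ W, shapley Finset.univ (fun S => theta C n m L S y i) j')
          + ∑ j' ∈ R, shapley Finset.univ (fun S => theta C n m L S y i) j' := by
          rw [Finset.sum_union (by
            simp only [Finset.disjoint_union_left]
            exact ⟨disjPR L y i, disjWR L y i⟩)]
      _ = (∑ j' ∈ P, shapley Finset.univ (fun S => theta C n m L S y i) j')
          + (∑ j' ∈ W, shapley Finset.univ (fun S => theta C n m L S y i) j')
          + ∑ j' ∈ R, shapley Finset.univ (fun S => theta C n m L S y i) j' := by
          rw [Finset.sum_union (disjPW L y i)]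
      _ = (P.card : ℝ) * SVpos C P.card W.card + (W.card : ℝ) * Efun C P.card W.card + 0 := by
          congr 1
          · congr 1
            · rw [Finset.sum_congr rfl (fun j' hj' => shap_correct
                (by rw [hP] at hj'; exact (Finset.mem_filter.mp hj').2)),
                Finset.sum_const, nsmul_eq_mul]
            · rw [Finset.sum_congr rfl (fun j' hj' => shap_wrong
                (by rw [hW] at hj'; exact (Finset.mem_filter.mp hj').2.1)
                (by rw [hW] at hj'; exact (Finset.mem_filter.mp hj').2.2)),
                Finset.sum_const, nsmul_eq_mul]
          · exact Finset.sum_eq_zero (fun j' hj' => shap_abstain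
              (by rw [hR] at hj'; exact (Finset.mem_filter.mp hj').2))
      _ = _ := by ring
  rw [hsplit, theta_empty, theta_univ_val (by rw [← hP, ← hW]; omega)] at heff
  rw [SVneg]
  have hwR : ((W.card : ℕ) : ℝ) ≠ 0 := by
    have : (0:ℝ) < ((W.card : ℕ) : ℝ) := by exact_mod_cast hw1
    positivity
  rw [eq_div_iff hwR]
  linarith [heff]

lemma shap_point : shapley Finset.univ (fun S => theta C n m L S y i) j
    = weshapWeight C n m L i j y := by
  rcases hv : L i j with _ | c
  · rw [shap_abstain hv, weshapWeight]
    simp [hv]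
  · by_cases hcy : c = y
    · subst hcy
      rw [shap_correct hv, weshapWeight]
      simp [hv]
    · have hjn : L i j ≠ none := by simp [hv]
      have hjy : L i j ≠ some y := by simp [hv, hcy]
      rw [shap_wrong hjn hjy, weshapWeight]
      simp only [if_neg hjy, if_neg hjn]
      exact efun_eq_svneg hjn hjy

end point

/-- The Shapley value of LF `j` in the single-instance proxy game on neighbor set `N`
(with `|N| = K`) equals the average of the WeShap weights `φ_{ij}^y` over `i ∈ N`. -/
theorem stmt_11 (C : ℕ) (hC : 2 ≤ C) (n m : ℕ) (hn : 1 ≤ n) (hm : 1 ≤ m)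
    (L : Fin n → Fin m → Option (Fin C)) (y : Fin C)
    (N : Finset (Fin n)) (hN : N.Nonempty) (K : ℕ) (hK : N.card = K) (j : Fin m) :
    shapley (Finset.univ : Finset (Fin m))
        (fun S => (1 / (K : ℝ)) * ∑ i ∈ N, theta C n m L S y i - 1 / (C : ℝ)) j =
      (1 / (K : ℝ)) * ∑ i ∈ N, weshapWeight C n m L i j y := by
  classical
  rw [shapley]
  have step1 : ∀ S ∈ ((Finset.univ : Finset (Fin m)).erase j).powerset,
      ((1 / (K : ℝ)) * ∑ i ∈ N, theta C n m L (insert j S) y i - 1 / (C : ℝ)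
        - ((1 / (K : ℝ)) * ∑ i ∈ N, theta C n m L S y i - 1 / (C : ℝ)))
        / ((((Finset.univ : Finset (Fin m)).card - 1).choose S.card : ℕ) : ℝ)
      = (1 / (K : ℝ)) * ∑ i ∈ N,
          (theta C n m L (insert j S) y i - theta C n m L S y i)
            / ((((Finset.univ : Finset (Fin m)).card - 1).choose S.card : ℕ) : ℝ) := by
    intro S _
    have hnum : (1 / (K : ℝ)) * ∑ i ∈ N, theta C n m L (insert j S) y i - 1 / (C : ℝ)
        - ((1 / (K : ℝ)) * ∑ i ∈ N, theta C n m L S y i - 1 / (C : ℝ))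
        = (1 / (K : ℝ)) * ∑ i ∈ N, (theta C n m L (insert j S) y i - theta C n m L S y i) := by
      rw [Finset.sum_sub_distrib]
      ring
    rw [hnum, mul_div_assoc, Finset.sum_div]
  rw [Finset.sum_congr rfl step1, ← Finset.mul_sum, Finset.sum_comm, mul_left_comm]
  congr 1
  rw [Finset.mul_sum]
  apply Finset.sum_congr rfl
  intro i hi
  rw [← shap_point (L := L) (y := y) (i := i) (j := j)]
  rfl
end

section
/- Let D_val be a nonempty finite validation set where each validation instance v has a label y_v ∈ Y and a set N_v of training points with |N_v| = K. Define the proxy game on the m labeling functions by the utility v(S) = (1/|D_val|) Σ_{v ∈ D_val} [ (1/K) Σ_{i ∈ N_v} Θ_S^{y_v}(i) − 1/C ] for S ⊆ {1, …, m}. Then the Shapley value of labeling function j in this game equals the WeShap value (1/|D_val|) Σ_{v ∈ D_val} (1/K) Σ_{i ∈ N_v} φ_{ij}^{y_v}. -/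
open Finset

section Lemmas

lemma choose_cast_ne (n k : ℕ) (h : k ≤ n) : ((n.choose k) : ℝ) ≠ 0 :=
  Nat.cast_ne_zero.mpr (Nat.choose_pos h).ne'


lemma choose_key (N s : ℕ) (hs : s + 1 ≤ N) :
    N * ((N-1).choose s) * ((N+1).choose (s+1)) = (N+1) * (N.choose s) * (N.choose (s+1)) := by
  have h2 : N * (N-1).choose s = N.choose (s+1) * (s+1) := by
    have h := Nat.add_one_mul_choose_eq (N-1) s
    have hN : N - 1 + 1 = N := Nat.sub_add_cancel (by omega)
    simp only [Nat.succ_eq_add_one, hN] at h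
    exact h
  have h1 : (N+1) * N.choose s = (N+1).choose (s+1) * (s+1) := Nat.add_one_mul_choose_eq N s
  calc N * ((N-1).choose s) * ((N+1).choose (s+1))
      = (N.choose (s+1) * (s+1)) * ((N+1).choose (s+1)) := by rw [h2]
    _ = ((N+1).choose (s+1) * (s+1)) * N.choose (s+1) := by ring
    _ = (N+1) * (N.choose s) * (N.choose (s+1)) := by rw [← h1]

lemma pair (N s : ℕ) (hs : s + 1 ≤ N) :
    (1:ℝ)/(N.choose s) + 1/(N.choose (s+1)) = ((N:ℝ)+1)/N * (1/((N-1).choose s)) := by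
  have hA : (N.choose s : ℝ) ≠ 0 := choose_cast_ne _ _ (by omega)
  have hB : (N.choose (s+1) : ℝ) ≠ 0 := choose_cast_ne _ _ hs
  have hE : (((N-1).choose s) : ℝ) ≠ 0 := choose_cast_ne _ _ (by omega)
  have hN : (N:ℝ) ≠ 0 := Nat.cast_ne_zero.mpr (by omega)
  have key := choose_key N s hs
  rw [Nat.choose_succ_succ N s] at key
  have keyR : (N:ℝ) * ((N-1).choose s) * ((N.choose s : ℝ) + (N.choose (s+1) : ℝ)) =
      ((N:ℝ)+1) * (N.choose s) * (N.choose (s+1)) := by exact_mod_cast key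
  field_simp
  linear_combination keyR

lemma hyp (n : ℕ) : ∀ q s : ℕ, q + s ≤ n →
    ∑ t ∈ Finset.range (q+1), (q.choose t : ℝ) / (n.choose (s+t)) =
      ((n:ℝ)+1)/((n:ℝ)+1-(q:ℝ)) * (1/((n-q).choose s)) := by
  intro q
  induction q with
  | zero =>
    intro s hs
    rw [Nat.sub_zero]
    simp only [Nat.choose_zero_right, Nat.cast_one, Nat.cast_zero, sub_zero]
    rw [div_self (by positivity : (n:ℝ)+1 ≠ 0)]
    simp
  | succ q ih =>
    intro s hs
    have e1 : ∑ t ∈ Finset.range (q+2), ((q+1).choose t : ℝ) / (n.choose (s+t)) =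
        (∑ t ∈ Finset.range (q+1), ((q+1).choose (t+1) : ℝ) / (n.choose (s+(t+1)))) + 1/(n.choose s) := by
      rw [Finset.sum_range_succ' (fun t => ((q+1).choose t : ℝ) / (n.choose (s+t)))]
      simp
    rw [e1]
    have e2 : ∀ t, ((q+1).choose (t+1) : ℝ) = (q.choose t : ℝ) + (q.choose (t+1) : ℝ) := by
      intro t; exact_mod_cast congrArg (Nat.cast (R := ℝ)) (Nat.choose_succ_succ q t)
    have e3 : (∑ t ∈ Finset.range (q+1), ((q+1).choose (t+1) : ℝ) / (n.choose (s+(t+1)))) =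
        (∑ t ∈ Finset.range (q+1), (q.choose t : ℝ) / (n.choose ((s+1)+t)))
        + (∑ t ∈ Finset.range (q+1), (q.choose (t+1) : ℝ) / (n.choose (s+(t+1)))) := by
      rw [← Finset.sum_add_distrib]
      apply Finset.sum_congr rfl
      intro t _
      rw [e2 t, add_div]
      have hst : s+(t+1) = (s+1)+t := by omega
      rw [hst]
    have e4 : (∑ t ∈ Finset.range (q+1), (q.choose (t+1) : ℝ) / (n.choose (s+(t+1)))) =
        (∑ t ∈ Finset.range (q+1), (q.choose t : ℝ) / (n.choose (s+t))) - 1/(n.choose s) := by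
      have := Finset.sum_range_succ' (fun t => (q.choose t : ℝ) / (n.choose (s+t))) (q+1)
      have htop : ∑ t ∈ Finset.range (q+2), (q.choose t : ℝ) / (n.choose (s+t)) =
          ∑ t ∈ Finset.range (q+1), (q.choose t : ℝ) / (n.choose (s+t)) := by
        rw [Finset.sum_range_succ]
        simp [Nat.choose_eq_zero_of_lt (by omega : q < q+1)]
      rw [htop] at this
      simp only [Nat.choose_zero_right, Nat.cast_one, add_zero] at this
      linarith [this]
    rw [e3, e4, ih s (by omega), ih (s+1) (by omega)]
    have hp := pair (n-q) s (by omega)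
    have c1 : (n - q).choose (s+1) = (n-q).choose (s+1) := rfl
    have c2 : (n - q - 1) = n - (q+1) := by omega
    rw [c2] at hp
    have cast1 : ((n:ℝ)+1-(q:ℝ)) ≠ 0 := by
      have : (q:ℝ) ≤ (n:ℝ) := by exact_mod_cast (by omega : q ≤ n)
      intro h; nlinarith
    have castnq : ((n-q : ℕ) : ℝ) = (n:ℝ) - (q:ℝ) := by
      push_cast [Nat.cast_sub (by omega : q ≤ n)]; ring
    rw [castnq] at hp
    have hnq : (n:ℝ)-(q:ℝ) ≠ 0 := by
      have : ((q:ℝ)+1) ≤ (n:ℝ) := by exact_mod_cast (by omega : q+1 ≤ n)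
      intro h; nlinarith
    have step : ((n:ℝ)+1)/((n:ℝ)+1-(q:ℝ)) * (1/((n-q).choose (s+1))) +
        (((n:ℝ)+1)/((n:ℝ)+1-(q:ℝ)) * (1/((n-q).choose s)) - 1/(n.choose s)) + 1/(n.choose s)
        = ((n:ℝ)+1)/((n:ℝ)+1-(q:ℝ)) * ((1:ℝ)/((n-q).choose s) + 1/((n-q).choose (s+1))) := by ring
    rw [step, hp]
    have hx : ((n:ℝ)+1)/((n:ℝ)+1-(q:ℝ)) * (((n:ℝ)-(q:ℝ)+1)/((n:ℝ)-(q:ℝ))) = ((n:ℝ)+1)/((n:ℝ)-(q:ℝ)) := by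
      rw [div_mul_div_comm]
      rw [show ((n:ℝ)-(q:ℝ)+1) = ((n:ℝ)+1-(q:ℝ)) by ring]
      rw [mul_comm ((n:ℝ)+1) _, mul_div_assoc]
      field_simp
    push_cast
    rw [← mul_assoc, hx]
    ring

variable {α : Type*} [DecidableEq α]

lemma powerset_erase (I : Finset α) (j : α) :
    (I.erase j).powerset = I.powerset.filter (fun T => j ∉ T) := by
  ext T
  simp [Finset.mem_powerset, Finset.subset_erase]

lemma shapley_split (I : Finset α) (v : Finset α → ℝ) (j : α) (hj : j ∈ I) :
    shapley I v j = (1/(I.card:ℝ)) *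
      ((∑ T ∈ I.powerset.filter (fun T => j ∈ T), v T / ((I.card-1).choose (T.card - 1) : ℝ))
        - ∑ T ∈ I.powerset.filter (fun T => j ∉ T), v T / ((I.card-1).choose T.card : ℝ)) := by
  unfold shapley
  congr 1
  simp only [sub_div, Finset.sum_sub_distrib]
  congr 1
  · refine Finset.sum_bij' (fun S _ => insert j S) (fun T _ => T.erase j) ?hi ?hj ?li ?ri ?h
    case hi =>
      intro S hS
      rw [Finset.mem_powerset] at hS
      rw [Finset.mem_filter, Finset.mem_powerset]
      refine ⟨?_, Finset.mem_insert_self j S⟩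
      exact Finset.insert_subset hj (hS.trans (Finset.erase_subset j I))
    case hj =>
      intro T hT
      rw [Finset.mem_filter, Finset.mem_powerset] at hT
      rw [Finset.mem_powerset]
      exact Finset.erase_subset_erase j hT.1
    case li =>
      intro S hS
      rw [Finset.mem_powerset] at hS
      exact Finset.erase_insert (fun hjS => (Finset.notMem_erase j I) (hS hjS))
    case ri =>
      intro T hT
      rw [Finset.mem_filter] at hT
      exact Finset.insert_erase hT.2
    case h =>
      intro S hS
      rw [Finset.mem_powerset] at hS
      have hjS : j ∉ S := fun hjS => (Finset.notMem_erase j I) (hS hjS)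
      rw [Finset.card_insert_of_notMem hjS]
      simp
  · rw [powerset_erase]

lemma swap_filter_mem (F : Finset α → ℝ) (I : Finset α) :
    ∑ j ∈ I, ∑ T ∈ I.powerset.filter (fun T => j ∈ T), F T
      = ∑ T ∈ I.powerset, (T.card : ℝ) * F T := by
  have h1 : ∀ j, ∑ T ∈ I.powerset.filter (fun T => j ∈ T), F T
      = ∑ T ∈ I.powerset, if j ∈ T then F T else 0 := fun j => Finset.sum_filter _ _
  simp only [h1]
  rw [Finset.sum_comm]
  apply Finset.sum_congr rfl
  intro T hT
  rw [Finset.mem_powerset] at hT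
  rw [← Finset.sum_filter]
  rw [Finset.filter_mem_eq_inter, Finset.inter_eq_right.mpr hT, Finset.sum_const, nsmul_eq_mul]

lemma swap_filter_not_mem (F : Finset α → ℝ) (I : Finset α) :
    ∑ j ∈ I, ∑ T ∈ I.powerset.filter (fun T => j ∉ T), F T
      = ∑ T ∈ I.powerset, ((I.card - T.card : ℕ) : ℝ) * F T := by
  have h1 : ∀ j, ∑ T ∈ I.powerset.filter (fun T => j ∉ T), F T
      = ∑ T ∈ I.powerset, if j ∉ T then F T else 0 := fun j => Finset.sum_filter _ _
  simp only [h1]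
  rw [Finset.sum_comm]
  apply Finset.sum_congr rfl
  intro T hT
  rw [Finset.mem_powerset] at hT
  rw [← Finset.sum_filter]
  have : I.filter (fun j => j ∉ T) = I \ T := by
    ext x; simp [Finset.mem_sdiff]
  rw [this, Finset.sum_const, nsmul_eq_mul, Finset.card_sdiff_of_subset hT]

lemma shapley_efficiency_s12 (I : Finset α) (hI : I.Nonempty) (v : Finset α → ℝ) :
    ∑ j ∈ I, shapley I v j = v I - v ∅ := by
  classical
  have hm1 : 1 ≤ I.card := Finset.card_pos.mpr hI
  have key : ∀ j ∈ I, shapley I v j = (1/(I.card:ℝ)) *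
      ((∑ T ∈ I.powerset.filter (fun T => j ∈ T), v T / ((I.card-1).choose (T.card - 1) : ℝ))
        - ∑ T ∈ I.powerset.filter (fun T => j ∉ T), v T / ((I.card-1).choose T.card : ℝ)) :=
    fun j hj => shapley_split I v j hj
  rw [Finset.sum_congr rfl key, ← Finset.mul_sum, Finset.sum_sub_distrib,
    swap_filter_mem, swap_filter_not_mem]
  have coeff : ∀ T ∈ I.powerset,
      (T.card : ℝ) * (v T / ((I.card-1).choose (T.card - 1) : ℝ))
        - ((I.card - T.card : ℕ) : ℝ) * (v T / ((I.card-1).choose T.card : ℝ))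
      = (if T = I then (I.card : ℝ) * v T else 0) - (if T = ∅ then (I.card : ℝ) * v T else 0) := by
    intro T hT
    rw [Finset.mem_powerset] at hT
    by_cases hTe : T = ∅
    · subst hTe
      simp [Finset.card_empty, Nat.choose_zero_right, (Finset.nonempty_iff_ne_empty.mp hI).symm,
        Ne.symm (Finset.nonempty_iff_ne_empty.mp hI)]
    by_cases hTI : T = I
    · subst hTI
      have : T.card - T.card = 0 := Nat.sub_self _
      simp only [hTe, if_neg hTe, if_pos rfl, this, Nat.cast_zero, zero_mul, sub_zero]
      simp [Nat.choose_self]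
    · -- 0 < T.card < I.card
      have hc1 : 1 ≤ T.card := Finset.card_pos.mpr (Finset.nonempty_iff_ne_empty.mpr hTe)
      have hc2 : T.card < I.card := Finset.card_lt_card (Finset.ssubset_iff_subset_ne.mpr ⟨hT, hTI⟩)
      rw [if_neg hTI, if_neg hTe, sub_zero]
      have hnat : (I.card-1).choose T.card * T.card = (I.card-1).choose (T.card - 1) * (I.card - T.card) := by
        have := Nat.choose_succ_right_eq (I.card-1) (T.card-1)
        have e1 : T.card - 1 + 1 = T.card := Nat.sub_add_cancel hc1
        rw [e1] at this
        have e2 : I.card - 1 - (T.card - 1) = I.card - T.card := by omega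
        rw [e2] at this
        exact this
      have hA : (((I.card-1).choose (T.card-1)) : ℝ) ≠ 0 := choose_cast_ne _ _ (by omega)
      have hB : (((I.card-1).choose T.card) : ℝ) ≠ 0 := choose_cast_ne _ _ (by omega)
      have hnatR : ((I.card-1).choose T.card : ℝ) * (T.card : ℝ)
          = ((I.card-1).choose (T.card-1) : ℝ) * ((I.card - T.card : ℕ) : ℝ) := by exact_mod_cast hnat
      field_simp
      linear_combination (v T) * hnatR
  rw [← Finset.sum_sub_distrib, Finset.sum_congr rfl coeff, Finset.sum_sub_distrib,
    Finset.sum_ite_eq' I.powerset I (fun T => (I.card : ℝ) * v T),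
    Finset.sum_ite_eq' I.powerset ∅ (fun T => (I.card : ℝ) * v T)]
  rw [if_pos (Finset.mem_powerset_self I), if_pos (Finset.empty_mem_powerset I)]
  have hm : (I.card : ℝ) ≠ 0 := Nat.cast_ne_zero.mpr (by omega)
  field_simp

lemma sum_powerset_union_disj {X Y : Finset α} (h : Disjoint X Y) (f : Finset α → ℝ) :
    ∑ S ∈ (X ∪ Y).powerset, f S = ∑ A ∈ X.powerset, ∑ B ∈ Y.powerset, f (A ∪ B) := by
  revert h
  induction X using Finset.induction_on generalizing f with
  | empty => intro h; simp
  | @insert a X' ha ih =>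
    intro h
    have haY : a ∉ Y := Finset.disjoint_left.mp h (Finset.mem_insert_self a X')
    have hd : Disjoint X' Y := h.mono_left (Finset.subset_insert a X')
    have haXY : a ∉ X' ∪ Y := by simp [ha, haY]
    rw [Finset.insert_union, Finset.sum_powerset_insert haXY, ih f hd,
      Finset.sum_powerset_insert ha (fun A => ∑ B ∈ Y.powerset, f (A ∪ B)),
      ih (fun S => f (insert a S)) hd]
    congr 1
    apply Finset.sum_congr rfl; intro A _; apply Finset.sum_congr rfl; intro B _
    rw [Finset.insert_union]

lemma sum_powerset_card (X : Finset α) (g : ℕ → ℝ) :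
    ∑ A ∈ X.powerset, g A.card = ∑ a ∈ Finset.range (X.card + 1), (X.card.choose a : ℝ) * g a := by
  rw [Finset.sum_powerset]
  apply Finset.sum_congr rfl
  intro a _
  have : ∀ A ∈ Finset.powersetCard a X, g A.card = g a := by
    intro A hA; rw [(Finset.mem_powersetCard.mp hA).2]
  rw [Finset.sum_congr rfl this, Finset.sum_const, Finset.card_powersetCard, nsmul_eq_mul]

lemma triple_group (X Y Z : Finset α) (hXY : Disjoint X Y) (hXZ : Disjoint X Z)
    (hYZ : Disjoint Y Z) (F : ℕ → ℕ → ℕ → ℝ) :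
    ∑ S ∈ (X ∪ (Y ∪ Z)).powerset, F (S ∩ X).card (S ∩ Y).card S.card
      = ∑ a ∈ Finset.range (X.card+1), (X.card.choose a : ℝ) *
          ∑ b ∈ Finset.range (Y.card+1), (Y.card.choose b : ℝ) *
            ∑ t ∈ Finset.range (Z.card+1), (Z.card.choose t : ℝ) * F a b (a+b+t) := by
  rw [sum_powerset_union_disj (Finset.disjoint_union_right.mpr ⟨hXY, hXZ⟩)]
  have step1 : ∀ A ∈ X.powerset,
      ∑ S' ∈ (Y ∪ Z).powerset, F ((A ∪ S') ∩ X).card ((A ∪ S') ∩ Y).card (A ∪ S').card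
        = ∑ B ∈ Y.powerset, ∑ Cs ∈ Z.powerset,
            F A.card B.card (A.card + B.card + Cs.card) := by
    intro A hA
    rw [Finset.mem_powerset] at hA
    rw [sum_powerset_union_disj hYZ]
    apply Finset.sum_congr rfl; intro B hB; apply Finset.sum_congr rfl; intro Cs hCs
    rw [Finset.mem_powerset] at hB hCs
    have hAB : Disjoint A B := (hXY.mono hA hB)
    have hAC : Disjoint A Cs := (hXZ.mono hA hCs)
    have hBC : Disjoint B Cs := (hYZ.mono hB hCs)
    have e1 : (A ∪ (B ∪ Cs)) ∩ X = A := by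
      rw [Finset.union_inter_distrib_right, Finset.union_inter_distrib_right,
        Finset.inter_eq_left.mpr hA,
        Finset.disjoint_iff_inter_eq_empty.mp ((hXY.symm.mono hB le_rfl)),
        Finset.disjoint_iff_inter_eq_empty.mp ((hXZ.symm.mono hCs le_rfl))]
      simp
    have e2 : (A ∪ (B ∪ Cs)) ∩ Y = B := by
      rw [Finset.union_inter_distrib_right, Finset.union_inter_distrib_right,
        Finset.inter_eq_left.mpr hB,
        Finset.disjoint_iff_inter_eq_empty.mp ((hXY.mono hA le_rfl)),
        Finset.disjoint_iff_inter_eq_empty.mp ((hYZ.symm.mono hCs le_rfl))]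
      simp
    have e3 : (A ∪ (B ∪ Cs)).card = A.card + B.card + Cs.card := by
      rw [Finset.card_union_of_disjoint (Finset.disjoint_union_right.mpr ⟨hAB, hAC⟩),
        Finset.card_union_of_disjoint hBC, add_assoc]
    rw [e1, e2, e3]
  rw [Finset.sum_congr rfl step1]
  have step2 : ∀ A ∈ X.powerset,
      (∑ B ∈ Y.powerset, ∑ Cs ∈ Z.powerset, F A.card B.card (A.card + B.card + Cs.card))
        = ∑ b ∈ Finset.range (Y.card+1), (Y.card.choose b : ℝ) *
            ∑ t ∈ Finset.range (Z.card+1), (Z.card.choose t : ℝ) * F A.card b (A.card+b+t) := by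
    intro A _
    have inner : ∀ B ∈ Y.powerset,
        (∑ Cs ∈ Z.powerset, F A.card B.card (A.card + B.card + Cs.card))
          = ∑ t ∈ Finset.range (Z.card+1), (Z.card.choose t : ℝ) * F A.card B.card (A.card+B.card+t) :=
      fun B _ => sum_powerset_card Z (fun t => F A.card B.card (A.card + B.card + t))
    rw [Finset.sum_congr rfl inner]
    exact sum_powerset_card Y (fun b => ∑ t ∈ Finset.range (Z.card+1),
      (Z.card.choose t : ℝ) * F A.card b (A.card+b+t))
  rw [Finset.sum_congr rfl step2]
  exact sum_powerset_card X (fun a => ∑ b ∈ Finset.range (Y.card+1), (Y.card.choose b : ℝ) *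
    ∑ t ∈ Finset.range (Z.card+1), (Z.card.choose t : ℝ) * F a b (a+b+t))

end Lemmas

section Single

variable (C n m : ℕ) (L : Fin n → Fin m → Option (Fin C))

/-- correct voters -/
def Pset (i : Fin n) (c : Fin C) : Finset (Fin m) :=
  Finset.univ.filter (fun k : Fin m => L i k = some c)

def Wset (i : Fin n) (c : Fin C) : Finset (Fin m) :=
  Finset.univ.filter (fun k : Fin m => L i k ≠ none ∧ L i k ≠ some c)

def Aset (i : Fin n) : Finset (Fin m) :=
  Finset.univ.filter (fun k : Fin m => L i k = none)

variable {C n m L}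

lemma filter_some (i : Fin n) (c : Fin C) (S : Finset (Fin m)) :
    S.filter (fun j => L i j = some c) = S ∩ Pset C n m L i c := by
  ext k; simp [Pset]

lemma filter_ne_none (i : Fin n) (c : Fin C) (S : Finset (Fin m)) :
    S.filter (fun j => L i j ≠ none) = S ∩ (Pset C n m L i c ∪ Wset C n m L i c) := by
  ext k
  simp only [Finset.mem_filter, Finset.mem_inter, Finset.mem_union, Pset, Wset, mem_univ, true_and]
  by_cases h1 : L i k = some c <;> by_cases h2 : L i k = none <;> simp [h1, h2] <;> tauto

lemma theta_eq (i : Fin n) (c : Fin C) (S : Finset (Fin m)) :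
    theta C n m L S c i =
      if (S ∩ (Pset C n m L i c ∪ Wset C n m L i c)).card = 0 then 1/(C:ℝ)
      else ((S ∩ Pset C n m L i c).card : ℝ) /
        ((S ∩ (Pset C n m L i c ∪ Wset C n m L i c)).card : ℝ) := by
  unfold theta
  rw [filter_some i c S, filter_ne_none i c S]

lemma disj_PW (i : Fin n) (c : Fin C) : Disjoint (Pset C n m L i c) (Wset C n m L i c) := by
  rw [Finset.disjoint_left]
  intro k hk hk'
  simp [Pset] at hk; simp [Wset] at hk'
  exact hk'.2 hk

lemma disj_PA (i : Fin n) (c : Fin C) : Disjoint (Pset C n m L i c) (Aset C n m L i) := by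
  rw [Finset.disjoint_left]
  intro k hk hk'
  simp [Pset] at hk; simp [Aset] at hk'
  rw [hk] at hk'; exact absurd hk' (by simp)

lemma disj_WA (i : Fin n) (c : Fin C) : Disjoint (Wset C n m L i c) (Aset C n m L i) := by
  rw [Finset.disjoint_left]
  intro k hk hk'
  simp [Wset] at hk; simp [Aset] at hk'
  exact hk.1 hk'

lemma union_PWA (i : Fin n) (c : Fin C) :
    Pset C n m L i c ∪ (Wset C n m L i c ∪ Aset C n m L i) = Finset.univ := by
  ext k
  simp only [Finset.mem_union, Pset, Wset, Aset, Finset.mem_filter, mem_univ, true_and, iff_true]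
  by_cases h1 : L i k = some c <;> by_cases h2 : L i k = none <;> tauto

lemma card_PWA (i : Fin n) (c : Fin C) :
    (Pset C n m L i c).card + ((Wset C n m L i c).card + (Aset C n m L i).card) = m := by
  rw [← Finset.card_union_of_disjoint (disj_WA i c),
    ← Finset.card_union_of_disjoint (Finset.disjoint_union_right.mpr ⟨disj_PW i c, disj_PA i c⟩),
    union_PWA i c, Finset.card_univ, Fintype.card_fin]

lemma shapley_theta_abstain (i : Fin n) (c : Fin C) (j : Fin m) (h : L i j = none) :
    shapley Finset.univ (fun S => theta C n m L S c i) j = 0 := by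
  unfold shapley
  have hz : ∀ S : Finset (Fin m), theta C n m L (insert j S) c i = theta C n m L S c i := by
    intro S
    simp [theta, Finset.filter_insert, h]
  simp [hz]

end Single

section PosCase
set_option maxHeartbeats 1000000 in
example : True := trivial

variable {C n m : ℕ} {L : Fin n → Fin m → Option (Fin C)}

lemma marginal_pos (i : Fin n) (c : Fin C) (j : Fin m) (h : L i j = some c)
    (S : Finset (Fin m)) (hjS : j ∉ S) :
    theta C n m L (insert j S) c i - theta C n m L S c i =
      psi C (S ∩ (Pset C n m L i c).erase j).card (S ∩ Wset C n m L i c).card := by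
  set P := Pset C n m L i c with hP
  set W := Wset C n m L i c with hW
  have hjP : j ∈ P := by simp [hP, Pset, h]
  have haP : S ∩ P.erase j = S ∩ P := by
    rw [Finset.inter_erase, Finset.erase_eq_of_notMem (fun hh => hjS (Finset.mem_inter.mp hh).1)]
  have hins_some : (insert j S) ∩ P = insert j (S ∩ P) := Finset.insert_inter_of_mem hjP
  have hins_ne : (insert j S) ∩ (P ∪ W) = insert j (S ∩ (P ∪ W)) :=
    Finset.insert_inter_of_mem (Finset.mem_union_left _ hjP)
  have hjSP : j ∉ S ∩ P := fun hh => hjS (Finset.mem_inter.mp hh).1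
  have hjSPW : j ∉ S ∩ (P ∪ W) := fun hh => hjS (Finset.mem_inter.mp hh).1
  have hsplit : (S ∩ (P ∪ W)).card = (S ∩ P).card + (S ∩ W).card := by
    rw [Finset.inter_union_distrib_left,
      Finset.card_union_of_disjoint ((disj_PW i c).mono Finset.inter_subset_right Finset.inter_subset_right)]
  rw [theta_eq, theta_eq, hins_ne, ← hP, ← hW] at *
  rw [hins_some, haP]
  rw [Finset.card_insert_of_notMem hjSPW, Finset.card_insert_of_notMem hjSP]
  set a := (S ∩ P).card
  set b := (S ∩ W).card
  rw [hsplit]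
  by_cases hab : a + b = 0
  · have ha : a = 0 := by omega
    have hb : b = 0 := by omega
    rw [psi, if_pos hab, ha, hb]
    norm_num
  · rw [psi, if_neg hab, if_neg (by omega), if_neg hab]
    push_cast
    ring

set_option maxHeartbeats 1000000 in
lemma shapley_theta_pos (i : Fin n) (c : Fin C) (j : Fin m) (h : L i j = some c)
    (hm : 1 ≤ m) :
    shapley Finset.univ (fun S => theta C n m L S c i) j
      = SVpos C (Pset C n m L i c).card (Wset C n m L i c).card := by
  classical
  set P := Pset C n m L i c with hP
  set W := Wset C n m L i c with hW
  set A := Aset C n m L i with hA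
  set p := P.card with hpc
  set w := W.card with hwc
  set q := A.card with hqc
  have hjP : j ∈ P := by simp [hP, Pset, h]
  have hp1 : 1 ≤ p := Finset.card_pos.mpr ⟨j, hjP⟩
  have hcard : p + (w + q) = m := card_PWA i c
  have hjW : j ∉ W := Finset.disjoint_left.mp (disj_PW i c) hjP
  have hjA : j ∉ A := Finset.disjoint_left.mp (disj_PA i c) hjP
  have hU : (Finset.univ : Finset (Fin m)).erase j = (P.erase j) ∪ (W ∪ A) := by
    rw [← union_PWA i c (L := L), Finset.erase_union_distrib, Finset.erase_union_distrib,
      Finset.erase_eq_of_notMem hjW, Finset.erase_eq_of_notMem hjA]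
  unfold shapley
  rw [Finset.card_univ, Fintype.card_fin, hU]
  have hmarg : ∀ S ∈ ((P.erase j) ∪ (W ∪ A)).powerset,
      (theta C n m L (insert j S) c i - theta C n m L S c i) / ((m-1).choose S.card : ℝ)
        = psi C (S ∩ P.erase j).card (S ∩ W).card / ((m-1).choose S.card : ℝ) := by
    intro S hS
    rw [Finset.mem_powerset, ← hU] at hS
    have hjS : j ∉ S := fun hj => (Finset.notMem_erase j _) (hS hj)
    rw [marginal_pos i c j h S hjS]
  rw [Finset.sum_congr rfl hmarg]
  have hdisj1 : Disjoint (P.erase j) W := (disj_PW i c).mono (Finset.erase_subset j P) le_rfl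
  have hdisj2 : Disjoint (P.erase j) A := (disj_PA i c).mono (Finset.erase_subset j P) le_rfl
  have hdisj3 : Disjoint W A := disj_WA i c
  rw [triple_group (P.erase j) W A hdisj1 hdisj2 hdisj3
    (fun a b s => psi C a b / ((m-1).choose s : ℝ))]
  rw [Finset.card_erase_of_mem hjP]
  -- collapse the t-sum
  have hcollapse : ∀ a ∈ Finset.range ((p-1)+1), ∀ b ∈ Finset.range (w+1),
      (∑ t ∈ Finset.range (q+1), (q.choose t : ℝ) * (psi C a b / ((m-1).choose (a+b+t) : ℝ)))
        = psi C a b * ((m:ℝ)/((p:ℝ)+(w:ℝ)) * (1/((p+w-1).choose (a+b) : ℝ))) := by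
    intro a ha b hb
    rw [Finset.mem_range] at ha hb
    have e1 : ∀ t, (q.choose t : ℝ) * (psi C a b / ((m-1).choose (a+b+t) : ℝ))
        = psi C a b * ((q.choose t : ℝ) / ((m-1).choose ((a+b)+t) : ℝ)) := by
      intro t; rw [show a+b+t = (a+b)+t from rfl]; ring
    rw [Finset.sum_congr rfl (fun t _ => e1 t), ← Finset.mul_sum,
      hyp (m-1) q (a+b) (by omega)]
    congr 1
    have c1 : ((m-1:ℕ):ℝ) + 1 = (m:ℝ) := by
      push_cast [Nat.cast_sub hm]; ring
    have c2 : m - 1 - q = p + w - 1 := by omega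
    rw [c1, c2]
    have c3 : (m:ℝ) - (q:ℝ) = (p:ℝ)+(w:ℝ) := by
      have hc : ((p:ℝ)) + ((w:ℝ)+(q:ℝ)) = (m:ℝ) := by exact_mod_cast hcard
      linarith
    rw [c3]
  rw [Finset.sum_congr rfl (fun a ha => by
    rw [Finset.sum_congr rfl (fun b hb => by
      rw [hcollapse a ha b hb])])]
  rw [Nat.sub_add_cancel hp1]
  show _ = SVpos C p w
  rw [SVpos]
  simp only [Finset.mul_sum]
  apply Finset.sum_congr rfl; intro a _
  apply Finset.sum_congr rfl; intro b _
  have hm0 : (m:ℝ) ≠ 0 := Nat.cast_ne_zero.mpr (by omega)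
  have key : (1:ℝ)/(m:ℝ) * ((m:ℝ)/((p:ℝ)+(w:ℝ))) = 1/((p:ℝ)+(w:ℝ)) := by
    rw [div_mul_div_comm, one_mul]
    rw [show ((m:ℝ)) / ((m:ℝ) * ((p:ℝ)+(w:ℝ))) = ((m:ℝ) * 1) / ((m:ℝ) * ((p:ℝ)+(w:ℝ))) by
      rw [mul_one]]
    exact mul_div_mul_left 1 _ hm0
  linear_combination (psi C a b * (((P.card - 1).choose a : ℝ)) * (((W.card).choose b : ℝ)) *
    (1/(((p + w - 1).choose (a+b) : ℝ)))) * key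

end PosCase

section NegCase

noncomputable def negpsi (C a b : ℕ) : ℝ :=
  (a:ℝ)/((a:ℝ)+(b:ℝ)+1) - (if a + b = 0 then 1/(C:ℝ) else (a:ℝ)/((a:ℝ)+(b:ℝ)))

noncomputable def Phi (C p w : ℕ) : ℝ :=
  ∑ a ∈ Finset.range (p+1), (p.choose a : ℝ) *
    ∑ b ∈ Finset.range ((w-1)+1), ((w-1).choose b : ℝ) *
      (negpsi C a b * ((1:ℝ)/((p:ℝ)+(w:ℝ)) * (1/(((p+w-1).choose (a+b)) : ℝ))))

variable {C n m : ℕ} {L : Fin n → Fin m → Option (Fin C)}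

lemma marginal_neg (i : Fin n) (c : Fin C) (j : Fin m) (h1 : L i j ≠ none)
    (h2 : L i j ≠ some c) (S : Finset (Fin m)) (hjS : j ∉ S) :
    theta C n m L (insert j S) c i - theta C n m L S c i =
      negpsi C (S ∩ Pset C n m L i c).card (S ∩ (Wset C n m L i c).erase j).card := by
  set P := Pset C n m L i c with hP
  set W := Wset C n m L i c with hW
  have hjW : j ∈ W := by simp [hW, Wset, h1, h2]
  have hjP : j ∉ P := Finset.disjoint_right.mp (disj_PW i c) hjW
  have haW : S ∩ W.erase j = S ∩ W := by
    rw [Finset.inter_erase, Finset.erase_eq_of_notMem (fun hh => hjS (Finset.mem_inter.mp hh).1)]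
  have hins_some : (insert j S) ∩ P = S ∩ P := Finset.insert_inter_of_notMem hjP
  have hins_ne : (insert j S) ∩ (P ∪ W) = insert j (S ∩ (P ∪ W)) :=
    Finset.insert_inter_of_mem (Finset.mem_union_right _ hjW)
  have hjSPW : j ∉ S ∩ (P ∪ W) := fun hh => hjS (Finset.mem_inter.mp hh).1
  have hsplit : (S ∩ (P ∪ W)).card = (S ∩ P).card + (S ∩ W).card := by
    rw [Finset.inter_union_distrib_left,
      Finset.card_union_of_disjoint ((disj_PW i c).mono Finset.inter_subset_right Finset.inter_subset_right)]
  rw [theta_eq, theta_eq, hins_ne, ← hP, ← hW] at *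
  rw [hins_some, haW]
  rw [Finset.card_insert_of_notMem hjSPW]
  set a := (S ∩ P).card
  set b := (S ∩ W).card
  rw [hsplit]
  by_cases hab : a + b = 0
  · have ha : a = 0 := by omega
    have hb : b = 0 := by omega
    rw [negpsi, if_pos hab, ha, hb]
    norm_num
  · rw [negpsi, if_neg (by omega), if_neg hab, if_neg hab]
    push_cast
    ring

set_option maxHeartbeats 1000000 in
lemma shapley_theta_neg_formula (i : Fin n) (c : Fin C) (j : Fin m) (h1 : L i j ≠ none)
    (h2 : L i j ≠ some c) (hm : 1 ≤ m) :
    shapley Finset.univ (fun S => theta C n m L S c i) j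
      = Phi C (Pset C n m L i c).card (Wset C n m L i c).card := by
  classical
  set P := Pset C n m L i c with hP
  set W := Wset C n m L i c with hW
  set A := Aset C n m L i with hA
  set p := P.card with hpc
  set w := W.card with hwc
  set q := A.card with hqc
  have hjW : j ∈ W := by simp [hW, Wset, h1, h2]
  have hw1 : 1 ≤ w := Finset.card_pos.mpr ⟨j, hjW⟩
  have hcard : p + (w + q) = m := card_PWA i c
  have hjP : j ∉ P := Finset.disjoint_right.mp (disj_PW i c) hjW
  have hjA : j ∉ A := Finset.disjoint_left.mp (disj_WA i c) hjW
  have hU : (Finset.univ : Finset (Fin m)).erase j = P ∪ ((W.erase j) ∪ A) := by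
    rw [← union_PWA i c (L := L), Finset.erase_union_distrib, Finset.erase_union_distrib,
      Finset.erase_eq_of_notMem hjP, Finset.erase_eq_of_notMem hjA]
  unfold shapley
  rw [Finset.card_univ, Fintype.card_fin, hU]
  have hmarg : ∀ S ∈ (P ∪ ((W.erase j) ∪ A)).powerset,
      (theta C n m L (insert j S) c i - theta C n m L S c i) / ((m-1).choose S.card : ℝ)
        = negpsi C (S ∩ P).card (S ∩ W.erase j).card / ((m-1).choose S.card : ℝ) := by
    intro S hS
    rw [Finset.mem_powerset, ← hU] at hS
    have hjS : j ∉ S := fun hj => (Finset.notMem_erase j _) (hS hj)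
    rw [marginal_neg i c j h1 h2 S hjS]
  rw [Finset.sum_congr rfl hmarg]
  have hdisj1 : Disjoint P (W.erase j) := (disj_PW i c).mono le_rfl (Finset.erase_subset j W)
  have hdisj2 : Disjoint P A := disj_PA i c
  have hdisj3 : Disjoint (W.erase j) A := (disj_WA i c).mono (Finset.erase_subset j W) le_rfl
  rw [triple_group P (W.erase j) A hdisj1 hdisj2 hdisj3
    (fun a b s => negpsi C a b / ((m-1).choose s : ℝ))]
  rw [Finset.card_erase_of_mem hjW]
  have hm0 : (m:ℝ) ≠ 0 := Nat.cast_ne_zero.mpr (by omega)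
  have key : (1:ℝ)/(m:ℝ) * ((m:ℝ)/((p:ℝ)+(w:ℝ))) = 1/((p:ℝ)+(w:ℝ)) := by
    rw [div_mul_div_comm, one_mul]
    rw [show ((m:ℝ)) / ((m:ℝ) * ((p:ℝ)+(w:ℝ))) = ((m:ℝ) * 1) / ((m:ℝ) * ((p:ℝ)+(w:ℝ))) by
      rw [mul_one]]
    exact mul_div_mul_left 1 _ hm0
  have hcollapse : ∀ a ∈ Finset.range (p+1), ∀ b ∈ Finset.range ((w-1)+1),
      (∑ t ∈ Finset.range (q+1), (q.choose t : ℝ) * (negpsi C a b / ((m-1).choose (a+b+t) : ℝ)))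
        = negpsi C a b * ((m:ℝ)/((p:ℝ)+(w:ℝ)) * (1/((p+w-1).choose (a+b) : ℝ))) := by
    intro a ha b hb
    rw [Finset.mem_range] at ha hb
    have e1 : ∀ t, (q.choose t : ℝ) * (negpsi C a b / ((m-1).choose (a+b+t) : ℝ))
        = negpsi C a b * ((q.choose t : ℝ) / ((m-1).choose ((a+b)+t) : ℝ)) := by
      intro t; rw [show a+b+t = (a+b)+t from rfl]; ring
    rw [Finset.sum_congr rfl (fun t _ => e1 t), ← Finset.mul_sum,
      hyp (m-1) q (a+b) (by omega)]
    congr 1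
    have c1 : ((m-1:ℕ):ℝ) + 1 = (m:ℝ) := by
      push_cast [Nat.cast_sub hm]; ring
    have c2 : m - 1 - q = p + w - 1 := by omega
    rw [c1, c2]
    have c3 : (m:ℝ) - (q:ℝ) = (p:ℝ)+(w:ℝ) := by
      have hc : ((p:ℝ)) + ((w:ℝ)+(q:ℝ)) = (m:ℝ) := by exact_mod_cast hcard
      linarith
    rw [c3]
  rw [Finset.sum_congr rfl (fun a ha => by
    rw [Finset.sum_congr rfl (fun b hb => by
      rw [hcollapse a ha b hb])])]
  rw [Phi]
  rw [Finset.mul_sum]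
  apply Finset.sum_congr rfl; intro a _
  rw [mul_left_comm]
  congr 1
  rw [Finset.mul_sum]
  apply Finset.sum_congr rfl; intro b _
  rw [mul_left_comm]
  congr 1
  linear_combination (negpsi C a b * (1/(((p+w-1).choose (a+b)):ℝ))) * key

end NegCase

section NegFinal

variable {C n m : ℕ} {L : Fin n → Fin m → Option (Fin C)}

set_option maxHeartbeats 1000000 in
lemma shapley_theta_neg (i : Fin n) (c : Fin C) (j : Fin m) (h1 : L i j ≠ none)
    (h2 : L i j ≠ some c) (hm : 1 ≤ m) :
    shapley Finset.univ (fun S => theta C n m L S c i) j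
      = SVneg C (Pset C n m L i c).card (Wset C n m L i c).card := by
  classical
  set P := Pset C n m L i c with hP
  set W := Wset C n m L i c with hW
  set A := Aset C n m L i with hA
  set p := P.card with hpc
  set w := W.card with hwc
  have hjW : j ∈ W := by simp [hW, Wset, h1, h2]
  have hw1 : 1 ≤ w := Finset.card_pos.mpr ⟨j, hjW⟩
  set g := fun S => theta C n m L S c i with hg
  have heff := shapley_efficiency_s12 (Finset.univ : Finset (Fin m)) ⟨j, Finset.mem_univ j⟩ g
  -- compute the grand coalition and empty coalition values
  have hgU : g Finset.univ = (p:ℝ)/((p:ℝ)+(w:ℝ)) := by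
    show theta C n m L Finset.univ c i = _
    rw [theta_eq (L := L) i c Finset.univ]
    rw [Finset.univ_inter, Finset.univ_inter, ← hP, ← hW]
    rw [Finset.card_union_of_disjoint (disj_PW i c), ← hpc, ← hwc]
    rw [if_neg (by omega)]
    push_cast
    ring
  have hgE : g ∅ = 1/(C:ℝ) := by
    show theta C n m L ∅ c i = _
    rw [theta_eq (L := L) i c ∅]
    simp
  -- split the sum over the partition
  have e0 : ∑ j' ∈ P ∪ (W ∪ A), shapley Finset.univ g j'
      = ∑ j' ∈ (Finset.univ : Finset (Fin m)), shapley Finset.univ g j' :=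
    Finset.sum_congr (union_PWA i c) (fun x _ => rfl)
  have hdPWA : Disjoint P (W ∪ A) :=
    Finset.disjoint_union_right.mpr ⟨disj_PW i c, disj_PA i c⟩
  have hsP : ∑ j' ∈ P, shapley Finset.univ g j' = (p:ℝ) * SVpos C p w := by
    have : ∀ j' ∈ P, shapley Finset.univ g j' = SVpos C p w := by
      intro j' hj'
      have : L i j' = some c := by
        rw [hP] at hj'; simpa [Pset] using hj'
      exact shapley_theta_pos i c j' this hm
    rw [Finset.sum_congr rfl this, Finset.sum_const, nsmul_eq_mul, ← hpc]
  have hsW : ∑ j' ∈ W, shapley Finset.univ g j' = (w:ℝ) * Phi C p w := by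
    have : ∀ j' ∈ W, shapley Finset.univ g j' = Phi C p w := by
      intro j' hj'
      have hj'' : L i j' ≠ none ∧ L i j' ≠ some c := by
        rw [hW] at hj'; simpa [Wset] using hj'
      exact shapley_theta_neg_formula i c j' hj''.1 hj''.2 hm
    rw [Finset.sum_congr rfl this, Finset.sum_const, nsmul_eq_mul, ← hwc]
  have hsA : ∑ j' ∈ A, shapley Finset.univ g j' = 0 := by
    have : ∀ j' ∈ A, shapley Finset.univ g j' = 0 := by
      intro j' hj'
      have : L i j' = none := by
        rw [hA] at hj'; simpa [Aset] using hj'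
      exact shapley_theta_abstain i c j' this
    rw [Finset.sum_congr rfl this, Finset.sum_const, smul_zero]
  rw [← e0, Finset.sum_union hdPWA, Finset.sum_union (disj_WA i c), hsP, hsW, hsA,
    hgU, hgE] at heff
  -- conclude
  have hj : shapley Finset.univ g j = Phi C p w := by
    have hj'' : L i j ≠ none ∧ L i j ≠ some c := ⟨h1, h2⟩
    exact shapley_theta_neg_formula i c j h1 h2 hm
  rw [hg] at hj
  rw [hj, SVneg]
  have hw0 : (w:ℝ) ≠ 0 := Nat.cast_ne_zero.mpr (by omega)
  rw [eq_div_iff hw0]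
  linarith [heff]

lemma shapley_theta (i : Fin n) (c : Fin C) (j : Fin m) (hm : 1 ≤ m) :
    shapley Finset.univ (fun S => theta C n m L S c i) j = weshapWeight C n m L i j c := by
  rw [weshapWeight]
  by_cases h1 : L i j = some c
  · rw [if_pos h1]
    exact shapley_theta_pos i c j h1 hm
  by_cases h2 : L i j = none
  · rw [if_neg h1, if_pos h2]
    exact shapley_theta_abstain i c j h2
  · rw [if_neg h1, if_neg h2]
    exact shapley_theta_neg i c j h2 h1 hm

end NegFinal

section Linearity

variable {α : Type*} [DecidableEq α]

lemma shapley_sum {ι : Type*} (s : Finset ι) (f : ι → Finset α → ℝ) (I : Finset α) (j : α) :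
    shapley I (fun S => ∑ x ∈ s, f x S) j = ∑ x ∈ s, shapley I (f x) j := by
  unfold shapley
  rw [← Finset.mul_sum]
  congr 1
  rw [Finset.sum_comm]
  apply Finset.sum_congr rfl; intro S _
  rw [← Finset.sum_div, ← Finset.sum_sub_distrib]

lemma shapley_smul (r : ℝ) (f : Finset α → ℝ) (I : Finset α) (j : α) :
    shapley I (fun S => r * f S) j = r * shapley I f j := by
  unfold shapley
  rw [← mul_assoc, mul_comm r (1/(I.card:ℝ)), mul_assoc]
  congr 1
  rw [Finset.mul_sum]
  apply Finset.sum_congr rfl; intro S _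
  rw [← mul_sub, mul_div_assoc]

lemma shapley_sub_const (f : Finset α → ℝ) (r : ℝ) (I : Finset α) (j : α) :
    shapley I (fun S => f S - r) j = shapley I f j := by
  unfold shapley
  congr 1
  apply Finset.sum_congr rfl; intro S _
  rw [sub_sub_sub_cancel_right]

end Linearity

/-- The Shapley value of LF `j` in the proxy game over a validation set `D` equals the
WeShap value: the average over validation instances of the averaged WeShap weights over
their `K` nearest neighbors. -/
theorem stmt_12 (C : ℕ) (hC : 2 ≤ C) (n m : ℕ) (hn : 1 ≤ n) (hm : 1 ≤ m)
    (L : Fin n → Fin m → Option (Fin C))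
    {V : Type*} [DecidableEq V] (D : Finset V) (hD : D.Nonempty)
    (yv : V → Fin C) (Nv : V → Finset (Fin n)) (K : ℕ)
    (hK : ∀ v ∈ D, (Nv v).card = K) (j : Fin m) :
    shapley (Finset.univ : Finset (Fin m))
        (fun S => (1 / (D.card : ℝ)) * ∑ v ∈ D,
          ((1 / (K : ℝ)) * ∑ i ∈ Nv v, theta C n m L S (yv v) i - 1 / (C : ℝ))) j =
      (1 / (D.card : ℝ)) * ∑ v ∈ D,
        (1 / (K : ℝ)) * ∑ i ∈ Nv v, weshapWeight C n m L i j (yv v) := by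
  rw [shapley_smul (1 / (D.card : ℝ))
    (fun S => ∑ v ∈ D, ((1 / (K : ℝ)) * ∑ i ∈ Nv v, theta C n m L S (yv v) i - 1 / (C : ℝ)))
    Finset.univ j]
  congr 1
  rw [shapley_sum D
    (fun v S => (1 / (K : ℝ)) * ∑ i ∈ Nv v, theta C n m L S (yv v) i - 1 / (C : ℝ))
    Finset.univ j]
  apply Finset.sum_congr rfl; intro v _
  rw [shapley_sub_const (fun S => (1 / (K : ℝ)) * ∑ i ∈ Nv v, theta C n m L S (yv v) i)
    (1 / (C : ℝ)) Finset.univ j]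
  rw [shapley_smul (1 / (K : ℝ)) (fun S => ∑ i ∈ Nv v, theta C n m L S (yv v) i)
    Finset.univ j]
  congr 1
  rw [shapley_sum (Nv v) (fun i S => theta C n m L S (yv v) i) Finset.univ j]
  apply Finset.sum_congr rfl; intro i _
  exact shapley_theta i (yv v) j hm
end
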